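/- arXiv:2102.04495 — 4 statements merged into one kernel-verified Lean document; each statement's English description precedes it below -/
import Mathlib

section
/- Let K be a finite subset of Z_+^n containing the zero multi-index, and let s : K → ℂ with s_0 > 0 (s_0 real and positive). Then there exists a compactly supported non-negative Borel measure μ on ℂ^n such that for every k = (k_1,...,k_n) in K, ∫_{ℂ^n} z_1^{k_1}···z_n^{k_n} dμ(z) = s_k. -/
open Complex Finset

lemma zeta_geom_sum (N : ℕ) (hN : 0 < N) (d : ℤ) :
    ∑ t ∈ Finset.range N, Complex.exp (((2 * Real.pi / N : ℝ) : ℂ) * Complex.I) ^ ((t : ℤ) * d)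
      = if (N : ℤ) ∣ d then (N : ℂ) else 0 := by
  set z : ℂ := Complex.exp (((2 * Real.pi / N : ℝ) : ℂ) * Complex.I) with hz
  have hN0 : (N : ℝ) ≠ 0 := Nat.cast_ne_zero.mpr hN.ne'
  have hzN : z ^ (N : ℕ) = 1 := by
    rw [hz, ← Complex.exp_nat_mul]
    have : (N : ℂ) * (((2 * Real.pi / N : ℝ) : ℂ) * Complex.I) = 2 * Real.pi * Complex.I := by
      have hNc : (N : ℂ) ≠ 0 := Nat.cast_ne_zero.mpr hN.ne'
      push_cast
      field_simp
    rw [this, Complex.exp_two_pi_mul_I]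
  have key : ∀ t : ℕ, z ^ ((t : ℤ) * d) = (z ^ d) ^ t := by
    intro t
    rw [mul_comm, zpow_mul, zpow_natCast]
  simp_rw [key]
  by_cases hdvd : (N : ℤ) ∣ d
  · obtain ⟨c, rfl⟩ := hdvd
    have : z ^ ((N : ℤ) * c) = 1 := by
      rw [zpow_mul, zpow_natCast, hzN, one_zpow]
    simp [this, hN]
  · have hne1 : z ^ d ≠ 1 := by
      intro h
      have : Complex.exp ((d : ℂ) * (((2 * Real.pi / N : ℝ) : ℂ) * Complex.I)) = 1 := by
        rw [← h, hz, ← Complex.exp_int_mul]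
      rw [Complex.exp_eq_one_iff] at this
      obtain ⟨j, hj⟩ := this
      apply hdvd
      refine ⟨j, ?_⟩
      have hI : (Complex.I : ℂ) ≠ 0 := Complex.I_ne_zero
      have hπ : (Real.pi : ℂ) ≠ 0 := by
        exact_mod_cast Complex.ofReal_ne_zero.mpr Real.pi_ne_zero
      have hNc : (N : ℂ) ≠ 0 := Nat.cast_ne_zero.mpr hN.ne'
      have : (d : ℂ) = (N : ℂ) * j := by
        push_cast at hj
        field_simp [hπ, hI] at hj
        have h2πI : (2 * (Real.pi : ℂ) * Complex.I) ≠ 0 := by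
          simp [hπ, hI]
        have := mul_right_cancel₀ h2πI (by linear_combination (2 * (Real.pi : ℂ) * Complex.I) * hj :
          (d : ℂ) * (2 * (Real.pi : ℂ) * Complex.I) = ((N : ℂ) * j) * (2 * (Real.pi : ℂ) * Complex.I))
        exact this
      exact_mod_cast this
    rw [geom_sum_eq hne1]
    have : (z ^ d) ^ N = 1 := by
      rw [← zpow_natCast, ← zpow_mul, mul_comm, zpow_mul, zpow_natCast, hzN, one_zpow]
    rw [this, if_neg hdvd]
    simp


open MeasureTheory

theorem truncated_moment_problem_Cn_sufficiency
    (n : ℕ) (K : Finset (Fin n → ℕ)) (s : (Fin n → ℕ) → ℂ)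
    (h0 : (0 : Fin n → ℕ) ∈ K)
    (hs0 : ∃ r : ℝ, 0 < r ∧ s 0 = (r : ℂ)) :
    ∃ μ : Measure (Fin n → ℂ),
      (∃ S : Set (Fin n → ℂ), IsCompact S ∧ μ Sᶜ = 0) ∧
      ∀ k ∈ K,
        Integrable (fun z : Fin n → ℂ => ∏ i, z i ^ k i) μ ∧
        ∫ z : Fin n → ℂ, ∏ i, z i ^ k i ∂μ = s k := by
  classical
  obtain ⟨r, hr, hsr⟩ := hs0
  -- base B and modulus N
  obtain ⟨B, hBdef⟩ : ∃ B : ℕ, B = (K.sup fun k => Finset.univ.sup k) + 1 := ⟨_, rfl⟩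
  have hkB : ∀ k ∈ K, ∀ i, k i < B := by
    intro k hk i
    have h1 : k i ≤ Finset.univ.sup k := Finset.le_sup (Finset.mem_univ i)
    have h2 : Finset.univ.sup k ≤ K.sup fun k => Finset.univ.sup k :=
      Finset.le_sup (f := fun k => Finset.univ.sup k) hk
    omega
  have hBpos : 0 < B := by omega
  obtain ⟨N, hNdef⟩ : ∃ N : ℕ, N = 2 * B ^ n := ⟨_, rfl⟩
  have hN : 0 < N := by
    rw [hNdef]; positivity
  obtain ⟨z, hzdef⟩ : ∃ z : ℂ, z = Complex.exp (((2 * Real.pi / N : ℝ) : ℂ) * Complex.I) :=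
    ⟨_, rfl⟩
  have hz0 : z ≠ 0 := hzdef ▸ Complex.exp_ne_zero _
  have hzabs : ‖z‖ = 1 := hzdef ▸ Complex.norm_exp_ofReal_mul_I _
  have hznorm : ‖z‖ = 1 := by rw [hzabs]
  have hgeom : ∀ d : ℤ, ∑ t ∈ Finset.range N, z ^ ((t : ℤ) * d)
      = if (N : ℤ) ∣ d then (N : ℂ) else 0 := by
    intro d
    rw [hzdef]
    exact zeta_geom_sum N hN d
  have hconj : (starRingEnd ℂ) z = z⁻¹ := by
    have h1 : z * (starRingEnd ℂ) z = 1 := by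
      rw [Complex.mul_conj, Complex.normSq_eq_norm_sq, hzabs]
      norm_num
    field_simp at h1 ⊢
    rw [mul_comm] at h1
    exact (mul_comm _ _).trans h1
  -- encoding
  obtain ⟨φ, hφdef⟩ : ∃ φ : (Fin n → ℕ) → ℕ, φ = fun k => ∑ i : Fin n, k i * B ^ (i.val) := ⟨_, rfl⟩
  have hφlt : ∀ k ∈ K, φ k < B ^ n := by
    intro k hk
    have : φ k = ((finFunctionFinEquiv (fun i => (⟨k i, hkB k hk i⟩ : Fin B))) : ℕ) := by
      rw [finFunctionFinEquiv_apply, hφdef]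
    rw [this]
    exact (finFunctionFinEquiv _).isLt
  have hφinj : ∀ k ∈ K, ∀ m ∈ K, φ k = φ m → k = m := by
    intro k hk m hm h
    have e1 : ((finFunctionFinEquiv (fun i => (⟨k i, hkB k hk i⟩ : Fin B))) : ℕ)
        = ((finFunctionFinEquiv (fun i => (⟨m i, hkB m hm i⟩ : Fin B))) : ℕ) := by
      rw [finFunctionFinEquiv_apply, finFunctionFinEquiv_apply]
      rw [hφdef] at h
      exact h
    have e2 := finFunctionFinEquiv.injective (Fin.val_injective e1)
    funext i
    exact congrArg Fin.val (congrFun e2 i)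
  have hφ0 : ∀ k : Fin n → ℕ, φ k = 0 ↔ k = 0 := by
    intro k
    rw [hφdef]
    constructor
    · intro h
      funext i
      have h2 := Finset.sum_eq_zero_iff.mp h i (Finset.mem_univ i)
      have hB : 0 < B ^ (i : ℕ) := pow_pos hBpos _
      have := Nat.mul_eq_zero.mp h2
      simpa using this.resolve_right hB.ne'
    · intro h; subst h; simp
  -- weights data
  obtain ⟨T, hTdef⟩ : ∃ T : Finset (Fin n → ℕ), T = K.erase 0 := ⟨_, rfl⟩
  have hTne : ∀ m ∈ T, m ≠ 0 := by
    intro m hm; rw [hTdef] at hm; exact Finset.ne_of_mem_erase hm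
  have hTK : ∀ m ∈ T, m ∈ K := by
    intro m hm; rw [hTdef] at hm; exact Finset.mem_of_mem_erase hm
  obtain ⟨A, hAdef⟩ : ∃ A : ℝ, A = ∑ m ∈ T, ‖s m‖ := ⟨_, rfl⟩
  have hA0 : 0 ≤ A := hAdef ▸ Finset.sum_nonneg fun m _ => norm_nonneg _
  obtain ⟨a, hadef⟩ : ∃ a : ℝ, a = 1 + 2 * A / r := ⟨_, rfl⟩
  have ha1 : (1 : ℝ) ≤ a := by
    have : 0 ≤ 2 * A / r := by positivity
    rw [hadef]; linarith
  have ha0 : (0 : ℝ) < a := lt_of_lt_of_le one_pos ha1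
  obtain ⟨σ, hσdef⟩ : ∃ σ : (Fin n → ℕ) → ℕ, σ = fun k => ∑ i, k i := ⟨_, rfl⟩
  have hσT : ∀ m ∈ T, 1 ≤ σ m := by
    intro m hm
    have hm0 : m ≠ 0 := hTne m hm
    rw [hσdef]
    by_contra h
    push_neg at h
    apply hm0
    funext i
    have h1 : ∑ i, m i = 0 := by omega
    exact Finset.sum_eq_zero_iff.mp h1 i (Finset.mem_univ i)
  obtain ⟨lam, hlamdef⟩ : ∃ lam : (Fin n → ℕ) → ℂ,
      lam = fun m => 2 * s m / ((N : ℂ) * (a : ℂ) ^ σ m) := ⟨_, rfl⟩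
  obtain ⟨C, hCdef⟩ : ∃ C : (Fin n → ℕ) → ℝ, C = fun m => ‖lam m‖ := ⟨_, rfl⟩
  have hC0 : ∀ m, 0 ≤ C m := fun m => hCdef ▸ norm_nonneg _
  have hNne : (N : ℝ) ≠ 0 := by positivity
  have hCval : ∀ m, C m = 2 * ‖s m‖ / ((N : ℝ) * a ^ σ m) := by
    intro m
    have hane : a ^ σ m ≠ 0 := by positivity
    rw [hCdef, hlamdef]
    simp only [norm_div, norm_mul, norm_pow, Complex.norm_real, Complex.norm_natCast]
    rw [Real.norm_of_nonneg ha0.le]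
    norm_num
  have hCN : ∀ m, (N : ℝ) * C m = 2 * ‖s m‖ / a ^ σ m := by
    intro m
    have hane : a ^ σ m ≠ 0 := by positivity
    rw [hCval m]
    field_simp
  obtain ⟨ε, hεdef⟩ : ∃ ε : ℝ, ε = r - ∑ m ∈ T, (N : ℝ) * C m := ⟨_, rfl⟩
  have hε : 0 ≤ ε := by
    have hbound : ∀ m ∈ T, (N : ℝ) * C m ≤ 2 * ‖s m‖ / a := by
      intro m hm
      rw [hCN m]
      apply div_le_div_of_nonneg_left (by positivity) ha0
      calc a = a ^ 1 := (pow_one a).symm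
        _ ≤ a ^ σ m := pow_le_pow_right₀ ha1 (hσT m hm)
    have h1 : ∑ m ∈ T, (N : ℝ) * C m ≤ ∑ m ∈ T, 2 * ‖s m‖ / a := Finset.sum_le_sum hbound
    have h2 : ∑ m ∈ T, 2 * ‖s m‖ / a = 2 * A / a := by
      rw [hAdef, Finset.mul_sum, Finset.sum_div]
    have h3 : 2 * A / a ≤ r := by
      rw [div_le_iff₀ ha0, hadef]
      have h4 : r * (1 + 2 * A / r) = r + 2 * A := by
        field_simp
      rw [h4]
      linarith
    rw [hεdef]
    rw [h2] at h1
    linarith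
  -- weights and points
  obtain ⟨w, hwdef⟩ : ∃ w : (Fin n → ℕ) → ℕ → ℝ,
      w = fun m t => C m + (lam m * (starRingEnd ℂ) (z ^ (t * φ m))).re := ⟨_, rfl⟩
  have hw0 : ∀ m t, 0 ≤ w m t := by
    intro m t
    have h1 : ‖lam m * (starRingEnd ℂ) (z ^ (t * φ m))‖ = C m := by
      rw [norm_mul, RCLike.norm_conj, norm_pow, hznorm, one_pow, mul_one, hCdef]
    have h2 : |(lam m * (starRingEnd ℂ) (z ^ (t * φ m))).re| ≤ C m := by
      rw [← h1]
      exact Complex.abs_re_le_norm _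
    have h3 := abs_le.mp h2
    rw [hwdef]
    simp only
    linarith [h3.1]
  obtain ⟨p, hpdef⟩ : ∃ p : ℕ → (Fin n → ℂ),
      p = fun t => fun i : Fin n => (a : ℂ) * z ^ (t * B ^ (i.val)) := ⟨_, rfl⟩
  obtain ⟨μ, hμdef⟩ : ∃ μ : Measure (Fin n → ℂ),
      μ = ENNReal.ofReal ε • Measure.dirac (0 : Fin n → ℂ)
        + ∑ m ∈ T, ∑ t ∈ Finset.range N, ENNReal.ofReal (w m t) • Measure.dirac (p t) := ⟨_, rfl⟩
  refine ⟨μ, ?_, ?_⟩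
  · -- compact support
    refine ⟨(↑(insert (0 : Fin n → ℂ) ((Finset.range N).image p)) : Set (Fin n → ℂ)), ?_, ?_⟩
    · exact (Finset.finite_toSet _).isCompact
    · set S : Set (Fin n → ℂ) := ↑(insert (0 : Fin n → ℂ) ((Finset.range N).image p)) with hS
      have hSc : MeasurableSet Sᶜ := (Finset.finite_toSet _).measurableSet.compl
      have hdirac : ∀ x, x ∈ S → Measure.dirac x Sᶜ = 0 := by
        intro x hx
        rw [Measure.dirac_apply' _ hSc]
        simp only [Set.indicator_apply]
        rw [if_neg (by simpa using hx)]
      have hmem0 : (0 : Fin n → ℂ) ∈ S := by simp [hS]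
      have hmemp : ∀ t ∈ Finset.range N, p t ∈ S := by
        intro t ht
        simp only [hS, Finset.coe_insert, Set.mem_insert_iff, Finset.coe_image, Set.mem_image]
        exact Or.inr ⟨t, by simpa using ht, rfl⟩
      rw [hμdef, Measure.add_apply, Measure.smul_apply, hdirac _ hmem0,
        Measure.finset_sum_apply]
      rw [Finset.sum_eq_zero, smul_zero, zero_add]
      intro m hm
      rw [Measure.finset_sum_apply, Finset.sum_eq_zero]
      intro t ht
      rw [Measure.smul_apply, hdirac _ (hmemp t ht), smul_zero]
  · -- moments
    intro k hk
    have hfc : Continuous (fun v : Fin n → ℂ => ∏ i, v i ^ k i) :=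
      continuous_finset_prod _ fun i _ => (continuous_apply i).pow _
    have hdint : ∀ x : Fin n → ℂ,
        Integrable (fun v : Fin n → ℂ => ∏ i, v i ^ k i) (Measure.dirac x) := by
      intro x
      refine ⟨hfc.aestronglyMeasurable, ?_⟩
      simp only [HasFiniteIntegral, lintegral_dirac]
      exact ENNReal.coe_lt_top
    have hint1 : Integrable (fun v : Fin n → ℂ => ∏ i, v i ^ k i)
        (ENNReal.ofReal ε • Measure.dirac (0 : Fin n → ℂ)) :=
      (hdint 0).smul_measure ENNReal.ofReal_ne_top
    have hint2 : Integrable (fun v : Fin n → ℂ => ∏ i, v i ^ k i)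
        (∑ m ∈ T, ∑ t ∈ Finset.range N, ENNReal.ofReal (w m t) • Measure.dirac (p t)) :=
      integrable_finset_sum_measure.mpr fun m _ =>
        integrable_finset_sum_measure.mpr fun t _ =>
          (hdint (p t)).smul_measure ENNReal.ofReal_ne_top
    have hintμ : Integrable (fun v : Fin n → ℂ => ∏ i, v i ^ k i) μ := by
      rw [hμdef]
      exact integrable_add_measure.mpr ⟨hint1, hint2⟩
    refine ⟨hintμ, ?_⟩
    have hsmul : ∀ (c : ℝ), 0 ≤ c → ∀ x : Fin n → ℂ,
        ∫ v, (∏ i, v i ^ k i) ∂(ENNReal.ofReal c • Measure.dirac x)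
          = (c : ℂ) * ∏ i, x i ^ k i := by
      intro c hc x
      rw [integral_smul_measure, integral_dirac, ENNReal.toReal_ofReal hc]
      rw [Complex.real_smul]
    have hred : ∫ v, (∏ i, v i ^ k i) ∂μ
        = (ε : ℂ) * (∏ i, (0 : Fin n → ℂ) i ^ k i)
          + ∑ m ∈ T, ∑ t ∈ Finset.range N, (w m t : ℂ) * ∏ i, p t i ^ k i := by
      rw [hμdef, integral_add_measure hint1 hint2, hsmul ε hε 0]
      congr 1
      rw [integral_finset_sum_measure (fun m _ => integrable_finset_sum_measure.mpr
        fun t _ => (hdint (p t)).smul_measure ENNReal.ofReal_ne_top)]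
      refine Finset.sum_congr rfl fun m _ => ?_
      rw [integral_finset_sum_measure (fun t _ => (hdint (p t)).smul_measure
        ENNReal.ofReal_ne_top)]
      exact Finset.sum_congr rfl fun t _ => hsmul (w m t) (hw0 m t) (p t)
    -- evaluate the monomial at the atoms
    have hfp : ∀ t : ℕ, (∏ i, p t i ^ k i) = (a : ℂ) ^ σ k * z ^ (t * φ k) := by
      intro t
      rw [hpdef]
      simp only
      calc ∏ i, ((a : ℂ) * z ^ (t * B ^ (i : Fin n).val)) ^ k i
          = ∏ i, ((a : ℂ) ^ k i * z ^ (t * B ^ (i : Fin n).val * k i)) := by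
            refine Finset.prod_congr rfl fun i _ => ?_
            rw [mul_pow, ← pow_mul]
        _ = ((a : ℂ) ^ ∑ i, k i) * z ^ (∑ i, t * B ^ (i : Fin n).val * k i) := by
            rw [Finset.prod_mul_distrib, Finset.prod_pow_eq_pow_sum, Finset.prod_pow_eq_pow_sum]
        _ = (a : ℂ) ^ σ k * z ^ (t * φ k) := by
            have he : (∑ i : Fin n, t * B ^ (i : Fin n).val * k i)
                = t * ∑ i : Fin n, k i * B ^ (i : Fin n).val := by
              rw [Finset.mul_sum]
              exact Finset.sum_congr rfl fun i _ => by ring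
            rw [hσdef, hφdef, he]
    -- core character sum
    have hBnN : B ^ n < N := by
      have : 0 < B ^ n := pow_pos hBpos n
      omega
    have hcore : ∀ m ∈ T, ∑ t ∈ Finset.range N, (w m t : ℂ) * z ^ (t * φ k)
        = (C m : ℂ) * (if k = 0 then (N : ℂ) else 0)
          + lam m / 2 * (if k = m then (N : ℂ) else 0) := by
      intro m hm
      have hpt : ∀ t : ℕ, (w m t : ℂ) * z ^ (t * φ k)
          = (C m : ℂ) * z ^ ((t : ℤ) * (φ k : ℤ))
            + lam m / 2 * z ^ ((t : ℤ) * ((φ k : ℤ) - (φ m : ℤ)))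
            + (starRingEnd ℂ) (lam m) / 2 * z ^ ((t : ℤ) * ((φ k : ℤ) + (φ m : ℤ))) := by
        intro t
        have hval : (starRingEnd ℂ) (z ^ (t * φ m)) = (z ^ (t * φ m))⁻¹ := by
          rw [map_pow, hconj, inv_pow]
        have hx : ((lam m * (starRingEnd ℂ) (z ^ (t * φ m))).re : ℂ)
            = (lam m * (z ^ (t * φ m))⁻¹ + (starRingEnd ℂ) (lam m) * z ^ (t * φ m)) / 2 := by
          have h1 := Complex.add_conj (lam m * (starRingEnd ℂ) (z ^ (t * φ m)))
          push_cast at h1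
          have h2 : (starRingEnd ℂ) (lam m * (starRingEnd ℂ) (z ^ (t * φ m)))
              = (starRingEnd ℂ) (lam m) * z ^ (t * φ m) := by
            rw [map_mul, Complex.conj_conj]
          linear_combination (-1/2 : ℂ) * h1 + (1/2 : ℂ) * h2 + (lam m / 2) * hval
        have e1 : z ^ ((t : ℤ) * (φ k : ℤ)) = z ^ (t * φ k) := by
          rw [show (t : ℤ) * (φ k : ℤ) = ((t * φ k : ℕ) : ℤ) by push_cast; ring, zpow_natCast]
        have e3 : z ^ ((t : ℤ) * ((φ k : ℤ) - (φ m : ℤ)))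
            = z ^ (t * φ k) * (z ^ (t * φ m))⁻¹ := by
          rw [show (t : ℤ) * ((φ k : ℤ) - (φ m : ℤ))
              = ((t * φ k : ℕ) : ℤ) + (-((t * φ m : ℕ) : ℤ)) by push_cast; ring,
            zpow_add₀ hz0, zpow_neg, zpow_natCast, zpow_natCast]
        have e4 : z ^ ((t : ℤ) * ((φ k : ℤ) + (φ m : ℤ)))
            = z ^ (t * φ k) * z ^ (t * φ m) := by
          rw [show (t : ℤ) * ((φ k : ℤ) + (φ m : ℤ))
              = ((t * φ k : ℕ) : ℤ) + ((t * φ m : ℕ) : ℤ) by push_cast; ring,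
            zpow_add₀ hz0, zpow_natCast, zpow_natCast]
        rw [hwdef]
        simp only
        rw [Complex.ofReal_add, hx, e1, e3, e4]
        ring
      calc ∑ t ∈ Finset.range N, (w m t : ℂ) * z ^ (t * φ k)
          = (C m : ℂ) * ∑ t ∈ Finset.range N, z ^ ((t : ℤ) * (φ k : ℤ))
            + lam m / 2 * ∑ t ∈ Finset.range N, z ^ ((t : ℤ) * ((φ k : ℤ) - (φ m : ℤ)))
            + (starRingEnd ℂ) (lam m) / 2
              * ∑ t ∈ Finset.range N, z ^ ((t : ℤ) * ((φ k : ℤ) + (φ m : ℤ))) := by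
            rw [Finset.mul_sum, Finset.mul_sum, Finset.mul_sum, ← Finset.sum_add_distrib,
              ← Finset.sum_add_distrib]
            exact Finset.sum_congr rfl fun t _ => hpt t
        _ = (C m : ℂ) * (if k = 0 then (N : ℂ) else 0)
            + lam m / 2 * (if k = m then (N : ℂ) else 0) := by
            rw [hgeom, hgeom, hgeom]
            have hd1 : ((N : ℤ) ∣ (φ k : ℤ)) ↔ k = 0 := by
              rw [Int.natCast_dvd_natCast]
              constructor
              · intro h
                exact (hφ0 k).mp (Nat.eq_zero_of_dvd_of_lt h (lt_trans (hφlt k hk) hBnN))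
              · intro h
                rw [(hφ0 k).mpr h]
                exact dvd_zero N
            have hd2 : ((N : ℤ) ∣ ((φ k : ℤ) - (φ m : ℤ))) ↔ k = m := by
              constructor
              · intro h
                by_cases hne : (φ k : ℤ) - (φ m : ℤ) = 0
                · exact hφinj k hk m (hTK m hm) (by omega)
                · exfalso
                  have hle := Int.le_of_dvd (abs_pos.mpr hne) ((dvd_abs _ _).mpr h)
                  have h1 := hφlt k hk
                  have h2 := hφlt m (hTK m hm)
                  have habs : |(φ k : ℤ) - (φ m : ℤ)| < (N : ℤ) := by
                    rw [abs_lt]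
                    constructor <;> omega
                  linarith
              · intro h
                rw [h]
                simp
            have hd3 : ¬ ((N : ℤ) ∣ ((φ k : ℤ) + (φ m : ℤ))) := by
              intro h
              have hφm : φ m ≠ 0 := fun h0 => hTne m hm ((hφ0 m).mp h0)
              have hpos : (0 : ℤ) < (φ k : ℤ) + (φ m : ℤ) := by
                have : 0 < φ m := Nat.pos_of_ne_zero hφm
                omega
              have hlt : (φ k : ℤ) + (φ m : ℤ) < N := by
                have h1 := hφlt k hk
                have h2 := hφlt m (hTK m hm)
                omega
              have := Int.le_of_dvd hpos h
              omega
            simp only [hd1, hd2, if_neg hd3, mul_zero, add_zero]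
    -- assemble
    have hsum : ∀ m ∈ T, ∑ t ∈ Finset.range N, (w m t : ℂ) * ∏ i, p t i ^ k i
        = (a : ℂ) ^ σ k * ((C m : ℂ) * (if k = 0 then (N : ℂ) else 0)
            + lam m / 2 * (if k = m then (N : ℂ) else 0)) := by
      intro m hm
      rw [← hcore m hm, Finset.mul_sum]
      refine Finset.sum_congr rfl fun t _ => ?_
      rw [hfp t]
      ring
    have hf0 : (∏ i, (0 : Fin n → ℂ) i ^ k i) = if k = 0 then 1 else 0 := by
      by_cases hk0 : k = 0
      · subst hk0; simp
      · rw [if_neg hk0]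
        obtain ⟨i, hi⟩ := Function.ne_iff.mp hk0
        refine Finset.prod_eq_zero (Finset.mem_univ i) ?_
        have : k i ≠ 0 := hi
        simp [zero_pow this]
    rw [hred, Finset.sum_congr rfl hsum, hf0]
    by_cases hk0 : k = 0
    · subst hk0
      rw [if_pos rfl, mul_one]
      have hterm : ∀ m ∈ T, (a : ℂ) ^ σ 0 * ((C m : ℂ) * (if (0 : Fin n → ℕ) = 0 then (N : ℂ) else 0)
          + lam m / 2 * (if (0 : Fin n → ℕ) = m then (N : ℂ) else 0))
          = (N : ℂ) * (C m : ℂ) := by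
        intro m hm
        rw [if_pos rfl, if_neg (fun h => hTne m hm h.symm)]
        have hσ0 : σ 0 = 0 := by rw [hσdef]; simp
        rw [hσ0, pow_zero]
        ring
      rw [Finset.sum_congr rfl hterm, hsr, hεdef]
      push_cast
      ring
    · rw [if_neg hk0, mul_zero, zero_add]
      have hkT : k ∈ T := by
        rw [hTdef]
        exact Finset.mem_erase.mpr ⟨hk0, hk⟩
      have hterm : ∀ m ∈ T, (a : ℂ) ^ σ k * ((C m : ℂ) * (if k = 0 then (N : ℂ) else 0)
          + lam m / 2 * (if k = m then (N : ℂ) else 0))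
          = if k = m then (a : ℂ) ^ σ k * (lam m / 2 * N) else 0 := by
        intro m hm
        rw [if_neg hk0]
        by_cases hkm : k = m
        · rw [if_pos hkm, if_pos hkm]; ring
        · rw [if_neg hkm, if_neg hkm]; ring
      rw [Finset.sum_congr rfl hterm, Finset.sum_ite_eq T k
        (fun m => (a : ℂ) ^ σ k * (lam m / 2 * N)), if_pos hkT, hlamdef]
      have haC : ((a : ℂ)) ^ σ k ≠ 0 := by
        apply pow_ne_zero
        exact_mod_cast ha0.ne'
      have hNC : (N : ℂ) ≠ 0 := Nat.cast_ne_zero.mpr hN.ne'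
      field_simp
end

section
/- Let K be a finite subset of Z_+^n containing the zero multi-index and let s : K → ℂ. The truncated moment problem ∫_{ℂ^n} z^k dμ(z) = s_k for all k ∈ K has a solution by a non-negative Borel measure μ on ℂ^n if and only if either s_0 > 0 (real and positive) or s_k = 0 for all k ∈ K. -/
open MeasureTheory Complex

lemma tmp_zpow_sum₀ {a : ℂ} (ha : a ≠ 0) {ι : Type*} (s : Finset ι) (f : ι → ℤ) :
    a ^ (∑ i ∈ s, f i) = ∏ i ∈ s, a ^ f i := by
  classical
  induction s using Finset.induction with
  | empty => simp
  | insert _ _ h ih => rw [Finset.sum_insert h, Finset.prod_insert h, zpow_add₀ ha, ih]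

lemma tmp_sum_pow (N : ℕ) (hN : N ≠ 0) (m : ℤ) :
    ∑ j : Fin N, Complex.exp (2 * Real.pi * Complex.I / N) ^ (m * ((j : ℕ) : ℤ)) =
      if (N : ℤ) ∣ m then (N : ℂ) else 0 := by
  set ζ := Complex.exp (2 * Real.pi * Complex.I / N) with hζdef
  have hζ : IsPrimitiveRoot ζ N := Complex.isPrimitiveRoot_exp N hN
  have key : ∀ j : Fin N, ζ ^ (m * ((j : ℕ) : ℤ)) = (ζ ^ m) ^ (j : ℕ) := by
    intro j; rw [zpow_mul, zpow_natCast]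
  simp_rw [key]
  rw [Fin.sum_univ_eq_sum_range (fun j => (ζ ^ m) ^ j)]
  by_cases hd : (N : ℤ) ∣ m
  · rw [if_pos hd]
    have h1 : ζ ^ m = 1 := (hζ.zpow_eq_one_iff_dvd m).mpr hd
    simp [h1]
  · rw [if_neg hd]
    have h1 : ζ ^ m ≠ 1 := fun h => hd ((hζ.zpow_eq_one_iff_dvd m).mp h)
    rw [geom_sum_eq h1]
    have h2 : (ζ ^ m) ^ N = 1 := by
      rw [← zpow_natCast (ζ ^ m) N, ← zpow_mul, mul_comm, zpow_mul, zpow_natCast, hζ.pow_eq_one,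
        one_zpow]
    rw [h2, sub_self, zero_div]

lemma tmp_sum_multi (n N : ℕ) (hN : N ≠ 0) (m : Fin n → ℤ) :
    ∑ x : Fin n → Fin N, ∏ i, Complex.exp (2 * Real.pi * Complex.I / N) ^ (m i * ((x i : ℕ) : ℤ)) =
      if ∀ i, (N : ℤ) ∣ m i then ((N : ℂ)) ^ n else 0 := by
  rw [← Fintype.prod_sum (fun i (j : Fin N) => Complex.exp (2 * Real.pi * Complex.I / N) ^ (m i * ((j : ℕ) : ℤ)))]
  simp_rw [tmp_sum_pow N hN]
  by_cases h : ∀ i, (N : ℤ) ∣ m i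
  · rw [if_pos h, Finset.prod_congr rfl (fun i _ => if_pos (h i)), Finset.prod_const]
    simp
  · rw [if_neg h]
    push_neg at h
    obtain ⟨i, hi⟩ := h
    exact Finset.prod_eq_zero (Finset.mem_univ i) (if_neg hi)

lemma tmp_integrable_dirac {α E : Type*} [MeasurableSpace α] [MeasurableSingletonClass α]
    [NormedAddCommGroup E] {f : α → E} (hf : StronglyMeasurable f) (a : α) :
    Integrable f (Measure.dirac a) := by
  refine ⟨hf.aestronglyMeasurable, ?_⟩
  rw [hasFiniteIntegral_def, lintegral_dirac]
  exact ENNReal.coe_lt_top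

lemma tmp_construction (n : ℕ) (K : Finset (Fin n → ℕ)) (s : (Fin n → ℕ) → ℂ)
    (r : ℝ) (hr : 0 < r) (hs0 : s 0 = (r : ℂ)) :
    ∃ μ : Measure (Fin n → ℂ),
      ∀ k ∈ K,
        Integrable (fun z : Fin n → ℂ => ∏ i, z i ^ k i) μ ∧
        ∫ z : Fin n → ℂ, ∏ i, z i ^ k i ∂μ = s k := by
  classical
  set K' : Finset (Fin n → ℕ) := K.erase 0 with hK'def
  set M : ℕ := K.sup (fun k => ∑ i, k i) with hMdef
  set N : ℕ := 2 * M + 1 with hNdef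
  have hNne : N ≠ 0 := by rw [hNdef]; exact Nat.succ_ne_zero _
  have hMN : 2 * M + 1 = N := hNdef.symm
  clear_value N M
  set ζ : ℂ := Complex.exp (2 * Real.pi * Complex.I / N) with hζdef
  have hζprim : IsPrimitiveRoot ζ N := Complex.isPrimitiveRoot_exp N hNne
  have hζ0 : ζ ≠ 0 := Complex.exp_ne_zero _
  have hζnorm : ‖ζ‖ = 1 := Complex.norm_eq_one_of_pow_eq_one hζprim.pow_eq_one hNne
  have hζnormz : ∀ t : ℤ, ‖ζ ^ t‖ = 1 := by
    intro t; rw [norm_zpow, hζnorm, one_zpow]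
  have hconjζ : (starRingEnd ℂ) ζ = ζ⁻¹ := by
    refine eq_inv_of_mul_eq_one_left ?_
    rw [mul_comm, Complex.mul_conj, Complex.normSq_eq_norm_sq, hζnorm]
    norm_num
  have hconjz : ∀ t : ℤ, (starRingEnd ℂ) (ζ ^ t) = ζ ^ (-t) := by
    intro t; rw [map_zpow₀, hconjζ, inv_zpow, zpow_neg]
  -- degree bounds
  have hdeg_le : ∀ k ∈ K, (∑ i, k i) ≤ M := by
    intro k hk
    rw [hMdef]
    exact Finset.le_sup (f := fun k => ∑ i, k i) hk
  have hcomp_le : ∀ k ∈ K, ∀ i, k i ≤ M := by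
    intro k hk i
    exact le_trans (Finset.single_le_sum (f := fun i => k i) (fun _ _ => Nat.zero_le _)
      (Finset.mem_univ i)) (hdeg_le k hk)
  -- scaling radius
  set S : ℝ := ∑ k ∈ K', ‖s k‖ with hSdef
  have hSnn : 0 ≤ S := Finset.sum_nonneg fun k _ => norm_nonneg _
  set R : ℝ := 1 + (4 / r) * S with hRdef
  have hR1 : (1 : ℝ) ≤ R := le_add_of_nonneg_right (mul_nonneg (by positivity) hSnn)
  have hR0 : (0 : ℝ) < R := lt_of_lt_of_le one_pos hR1
  have hRc0 : (R : ℂ) ≠ 0 := by exact_mod_cast hR0.ne'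
  -- coefficients
  set c : (Fin n → ℕ) → ℂ := fun k => s k / (R : ℂ) ^ (∑ i, k i) with hcdef
  have hc0 : c 0 = (r : ℂ) := by
    simp [hcdef, hs0]
  have hcbound : ∀ k ∈ K', ‖c k‖ ≤ ‖s k‖ / R := by
    intro k hk
    have hkne : k ≠ 0 := Finset.ne_of_mem_erase hk
    have hdeg1 : 1 ≤ ∑ i, k i := by
      by_contra h
      push_neg at h
      apply hkne
      funext i
      have := Finset.sum_eq_zero_iff.mp (Nat.lt_one_iff.mp h) i (Finset.mem_univ i)
      simpa using this
    have hpow : R ≤ R ^ (∑ i, k i) := by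
      calc R = R ^ 1 := (pow_one R).symm
      _ ≤ R ^ (∑ i, k i) := pow_le_pow_right₀ hR1 hdeg1
    rw [hcdef]
    simp only [norm_div]
    rw [norm_pow, Complex.norm_real, Real.norm_of_nonneg hR0.le]
    apply div_le_div_of_nonneg_left (norm_nonneg _) hR0
    exact hpow
  -- the phase sums
  set D : (Fin n → ℕ) → (Fin n → Fin N) → ℤ :=
    fun k x => ∑ i, (k i : ℤ) * ((x i : ℕ) : ℤ) with hDdef
  have hsum : ∀ v : Fin n → ℤ,
      ∑ x : Fin n → Fin N, ζ ^ (∑ i, v i * ((x i : ℕ) : ℤ)) =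
        if ∀ i, (N : ℤ) ∣ v i then ((N : ℂ)) ^ n else 0 := by
    intro v
    simp_rw [tmp_zpow_sum₀ hζ0]
    exact tmp_sum_multi n N hNne v
  -- the weight function
  set W : (Fin n → Fin N) → ℂ := fun x =>
    (r : ℂ) + ∑ k ∈ K', (c k * ζ ^ (-(D k x)) + (starRingEnd ℂ) (c k) * ζ ^ (D k x)) with hWdef
  have hWconj : ∀ x, (starRingEnd ℂ) (W x) = W x := by
    intro x
    rw [hWdef]
    rw [map_add, map_sum, Complex.conj_ofReal]
    congr 1
    refine Finset.sum_congr rfl fun k _ => ?_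
    rw [map_add, map_mul, map_mul, hconjz, hconjz, Complex.conj_conj, neg_neg, add_comm]
  set w : (Fin n → Fin N) → ℝ := fun x => (W x).re with hwdef
  have hwW : ∀ x, ((w x : ℝ) : ℂ) = W x := by
    intro x
    exact Complex.conj_eq_iff_re.mp (hWconj x)
  have hwpos : ∀ x, 0 ≤ w x := by
    intro x
    have hTnorm : ‖∑ k ∈ K', (c k * ζ ^ (-(D k x)) + (starRingEnd ℂ) (c k) * ζ ^ (D k x))‖
        ≤ 2 * S / R := by
      calc ‖∑ k ∈ K', (c k * ζ ^ (-(D k x)) + (starRingEnd ℂ) (c k) * ζ ^ (D k x))‖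
          ≤ ∑ k ∈ K', ‖c k * ζ ^ (-(D k x)) + (starRingEnd ℂ) (c k) * ζ ^ (D k x)‖ :=
            norm_sum_le _ _
        _ ≤ ∑ k ∈ K', 2 * (‖s k‖ / R) := by
            refine Finset.sum_le_sum fun k hk => ?_
            calc ‖c k * ζ ^ (-(D k x)) + (starRingEnd ℂ) (c k) * ζ ^ (D k x)‖
                ≤ ‖c k * ζ ^ (-(D k x))‖ + ‖(starRingEnd ℂ) (c k) * ζ ^ (D k x)‖ :=
                  norm_add_le _ _
              _ = ‖c k‖ + ‖c k‖ := by
                  rw [norm_mul, norm_mul, hζnormz, hζnormz, mul_one, mul_one,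
                    RCLike.norm_conj]
              _ ≤ 2 * (‖s k‖ / R) := by
                  have := hcbound k hk
                  linarith
        _ = 2 * S / R := by
            rw [← Finset.mul_sum, ← Finset.sum_div, mul_div_assoc]
    have hre : -(2 * S / R) ≤ (∑ k ∈ K', (c k * ζ ^ (-(D k x)) + (starRingEnd ℂ) (c k) * ζ ^ (D k x))).re := by
      have h1 := Complex.abs_re_le_norm (∑ k ∈ K', (c k * ζ ^ (-(D k x)) + (starRingEnd ℂ) (c k) * ζ ^ (D k x)))
      have h2 := abs_le.mp (le_trans h1 hTnorm)
      exact h2.1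
    have hSR : 2 * S / R ≤ r / 2 := by
      rw [div_le_div_iff₀ hR0 (by norm_num : (0:ℝ) < 2)]
      have hrR : r * R = r + 4 * S := by
        rw [hRdef]; field_simp
      nlinarith
    have : w x = r + (∑ k ∈ K', (c k * ζ ^ (-(D k x)) + (starRingEnd ℂ) (c k) * ζ ^ (D k x))).re := by
      rw [hwdef, hWdef]
      simp [Complex.add_re, Complex.ofReal_re]
    rw [this]
    linarith
  -- exponent identities
  have hexp_sub : ∀ (k : Fin n → ℕ) (m : Fin n → ℕ) (x : Fin n → Fin N),
      -(D k x) + D m x = ∑ i, ((m i : ℤ) - (k i : ℤ)) * ((x i : ℕ) : ℤ) := by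
    intro k m x
    simp only [hDdef, sub_mul, Finset.sum_sub_distrib]
    ring
  have hexp_add : ∀ (k : Fin n → ℕ) (m : Fin n → ℕ) (x : Fin n → Fin N),
      D k x + D m x = ∑ i, ((m i : ℤ) + (k i : ℤ)) * ((x i : ℕ) : ℤ) := by
    intro k m x
    simp only [hDdef, add_mul, Finset.sum_add_distrib]
    ring
  -- key computation
  have key : ∀ m ∈ K, ∑ x : Fin n → Fin N, W x * ζ ^ (D m x) = c m * (N : ℂ) ^ n := by
    intro m hm
    have hWexp : ∀ x, W x * ζ ^ (D m x) =
        (r : ℂ) * ζ ^ (D m x) +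
          ∑ k ∈ K', (c k * ζ ^ (∑ i, ((m i : ℤ) - (k i : ℤ)) * ((x i : ℕ) : ℤ))
            + (starRingEnd ℂ) (c k) * ζ ^ (∑ i, ((m i : ℤ) + (k i : ℤ)) * ((x i : ℕ) : ℤ))) := by
      intro x
      rw [hWdef]
      simp only []
      rw [add_mul, Finset.sum_mul]
      exact congrArg (HAdd.hAdd ((r : ℂ) * ζ ^ (D m x)))
        (Finset.sum_congr rfl fun k _ => by
          rw [add_mul, mul_assoc, mul_assoc, ← zpow_add₀ hζ0, ← zpow_add₀ hζ0,
            hexp_sub k m x, hexp_add k m x])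
    simp_rw [hWexp]
    rw [Finset.sum_add_distrib, ← Finset.mul_sum]
    have hsum0 : (∑ x : Fin n → Fin N, ζ ^ (D m x))
        = if ∀ i, (N : ℤ) ∣ (m i : ℤ) then ((N : ℂ)) ^ n else 0 := by
      simp only [hDdef]
      exact hsum _
    rw [hsum0, Finset.sum_comm]
    have hterm : ∀ k ∈ K',
        ∑ x : Fin n → Fin N, (c k * ζ ^ (∑ i, ((m i : ℤ) - (k i : ℤ)) * ((x i : ℕ) : ℤ))
            + (starRingEnd ℂ) (c k) * ζ ^ (∑ i, ((m i : ℤ) + (k i : ℤ)) * ((x i : ℕ) : ℤ)))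
          = if m = k then c k * (N : ℂ) ^ n else 0 := by
      intro k hk
      obtain ⟨hkne, hkK⟩ := Finset.mem_erase.mp hk
      rw [Finset.sum_add_distrib, ← Finset.mul_sum, ← Finset.mul_sum,
        hsum (fun i => (m i : ℤ) - (k i : ℤ)), hsum (fun i => (m i : ℤ) + (k i : ℤ))]
      have hadd : ¬ (∀ i, (N : ℤ) ∣ ((m i : ℤ) + (k i : ℤ))) := by
        intro hdvd
        obtain ⟨i, hi⟩ : ∃ i, k i ≠ 0 := by
          by_contra hcon
          push_neg at hcon
          exact hkne (funext fun i => hcon i)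
        have h1 : ((m i + k i : ℕ) : ℤ) = (m i : ℤ) + (k i : ℤ) := by push_cast; ring
        have h2 : N ∣ m i + k i := by
          rw [← Int.natCast_dvd_natCast, h1]
          exact hdvd i
        have h3 : m i + k i < N := by
          rw [← hMN, two_mul]
          exact Nat.lt_succ_of_le (Nat.add_le_add (hcomp_le m hm i) (hcomp_le k hkK i))
        exact hi (Nat.add_eq_zero.mp (Nat.eq_zero_of_dvd_of_lt h2 h3)).2
      rw [if_neg hadd, mul_zero, add_zero]
      by_cases hmk : m = k
      · subst hmk
        have hdvdsub : ∀ i, (N : ℤ) ∣ ((m i : ℤ) - (m i : ℤ)) := fun i => by simp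
        rw [if_pos hdvdsub, if_pos rfl]
      · rw [if_neg hmk, if_neg, mul_zero]
        intro hdvd
        apply hmk
        funext i
        have h1 : ((m i : ℤ) - (k i : ℤ)) = 0 := by
          refine Int.eq_zero_of_dvd_of_natAbs_lt_natAbs (hdvd i) ?_
          have hb1 : ((m i : ℤ) - (k i : ℤ)).natAbs ≤ m i + k i := by
            calc ((m i : ℤ) - (k i : ℤ)).natAbs
                ≤ (m i : ℤ).natAbs + ((k i : ℤ)).natAbs := Int.natAbs_sub_le _ _
              _ = m i + k i := by simp
          rw [Int.natAbs_natCast]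
          calc ((m i : ℤ) - (k i : ℤ)).natAbs ≤ m i + k i := hb1
            _ < N := by
              rw [← hMN, two_mul]
              exact Nat.lt_succ_of_le (Nat.add_le_add (hcomp_le m hm i) (hcomp_le k hkK i))
        exact_mod_cast sub_eq_zero.mp h1
    rw [Finset.sum_congr rfl hterm]
    have hsumite : ∑ k ∈ K', (if m = k then c k * (N : ℂ) ^ n else 0)
        = if m ∈ K' then c m * (N : ℂ) ^ n else 0 := Finset.sum_ite_eq K' m _
    rw [hsumite]
    by_cases hm0 : m = 0
    · subst hm0
      have hdvd0 : ∀ i, (N : ℤ) ∣ (((0 : Fin n → ℕ) i : ℕ) : ℤ) := fun i => by simp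
      rw [if_pos hdvd0, if_neg (fun h => (Finset.mem_erase.mp h).1 rfl), add_zero, hc0]
    · rw [if_neg, if_pos (Finset.mem_erase.mpr ⟨hm0, hm⟩), mul_zero, zero_add]
      intro hdvd
      apply hm0
      funext i
      have h2 : N ∣ m i := by
        rw [← Int.natCast_dvd_natCast]
        exact hdvd i
      have h3 : m i < N := by
        rw [← hMN, two_mul]
        exact Nat.lt_succ_of_le (le_trans (hcomp_le m hm i) (Nat.le_add_left M M))
      exact Nat.eq_zero_of_dvd_of_lt h2 h3
  -- the atomic measure
  set a : (Fin n → Fin N) → (Fin n → ℂ) := fun x i => (R : ℂ) * ζ ^ ((x i : ℕ)) with hadef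
  set μ : Measure (Fin n → ℂ) :=
    ∑ x : Fin n → Fin N, ENNReal.ofReal (w x / (N : ℝ) ^ n) • Measure.dirac (a x) with hμdef
  refine ⟨μ, fun k hk => ?_⟩
  have hfm : StronglyMeasurable (fun z : Fin n → ℂ => ∏ i, z i ^ k i) := by
    apply Measurable.stronglyMeasurable
    exact Finset.measurable_prod _ fun i _ => (measurable_pi_apply i).pow_const _
  have hintx : ∀ x ∈ (Finset.univ : Finset (Fin n → Fin N)),
      Integrable (fun z : Fin n → ℂ => ∏ i, z i ^ k i)
        (ENNReal.ofReal (w x / (N : ℝ) ^ n) • Measure.dirac (a x)) :=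
    fun x _ => (tmp_integrable_dirac hfm (a x)).smul_measure ENNReal.ofReal_ne_top
  have hint : Integrable (fun z : Fin n → ℂ => ∏ i, z i ^ k i) μ := by
    rw [hμdef]
    exact integrable_finset_sum_measure.mpr hintx
  refine ⟨hint, ?_⟩
  rw [hμdef, integral_finset_sum_measure hintx]
  simp_rw [integral_smul_measure, integral_dirac]
  have hNRpos : (0 : ℝ) < (N : ℝ) ^ n := by
    have : (0 : ℝ) < (N : ℝ) := by
      have := Nat.pos_of_ne_zero hNne
      exact_mod_cast this
    positivity
  have htr : ∀ x : Fin n → Fin N,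
      (ENNReal.ofReal (w x / (N : ℝ) ^ n)).toReal = w x / (N : ℝ) ^ n :=
    fun x => ENNReal.toReal_ofReal (div_nonneg (hwpos x) hNRpos.le)
  simp_rw [htr]
  -- value of the monomial at the atoms
  have hfa : ∀ x : Fin n → Fin N,
      (∏ i, (a x i) ^ k i) = (R : ℂ) ^ (∑ i, k i) * ζ ^ (D k x) := by
    intro x
    have hcast : ((∑ i, (x i : ℕ) * k i : ℕ) : ℤ) = D k x := by
      simp only [hDdef]
      push_cast
      exact Finset.sum_congr rfl fun i _ => mul_comm _ _
    calc (∏ i, (a x i) ^ k i)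
        = ∏ i, ((R : ℂ) ^ k i * (ζ ^ ((x i : ℕ))) ^ k i) := by
          refine Finset.prod_congr rfl fun i _ => ?_
          rw [hadef]
          exact mul_pow _ _ _
      _ = ((R : ℂ) ^ (∑ i, k i)) * ∏ i, ζ ^ ((x i : ℕ) * k i) := by
          rw [Finset.prod_mul_distrib, Finset.prod_pow_eq_pow_sum]
          refine congrArg _ (Finset.prod_congr rfl fun i _ => ?_)
          rw [← pow_mul]
      _ = ((R : ℂ) ^ (∑ i, k i)) * ζ ^ ((∑ i, (x i : ℕ) * k i : ℕ)) := by
          rw [Finset.prod_pow_eq_pow_sum]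
      _ = (R : ℂ) ^ (∑ i, k i) * ζ ^ (D k x) := by
          rw [← hcast, zpow_natCast]
  simp_rw [hfa]
  have hterm2 : ∀ x : Fin n → Fin N,
      (w x / (N : ℝ) ^ n) • ((R : ℂ) ^ (∑ i, k i) * ζ ^ (D k x)) =
        ((R : ℂ) ^ (∑ i, k i) / ((N : ℂ)) ^ n) * (W x * ζ ^ (D k x)) := by
    intro x
    rw [Complex.real_smul, ← hwW x]
    push_cast
    ring
  simp_rw [hterm2]
  rw [← Finset.mul_sum, key k hk]
  have hNc : ((N : ℂ)) ^ n ≠ 0 := pow_ne_zero _ (Nat.cast_ne_zero.mpr hNne)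
  have hRp : ((R : ℂ)) ^ (∑ i, k i) ≠ 0 := pow_ne_zero _ hRc0
  rw [hcdef]
  field_simp

theorem truncated_moment_problem_Cn_solvability_iff
    (n : ℕ) (K : Finset (Fin n → ℕ)) (s : (Fin n → ℕ) → ℂ)
    (h0 : (0 : Fin n → ℕ) ∈ K) :
    (∃ μ : Measure (Fin n → ℂ),
      ∀ k ∈ K,
        Integrable (fun z : Fin n → ℂ => ∏ i, z i ^ k i) μ ∧
        ∫ z : Fin n → ℂ, ∏ i, z i ^ k i ∂μ = s k)
    ↔ ((∃ r : ℝ, 0 < r ∧ s 0 = (r : ℂ)) ∨ ∀ k ∈ K, s k = 0) := by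
  constructor
  · rintro ⟨μ, hμ⟩
    obtain ⟨hint, hval⟩ := hμ 0 h0
    simp only [Pi.zero_apply, pow_zero, Finset.prod_const_one] at hint hval
    by_cases hz : μ = 0
    · right
      intro k hk
      rw [← (hμ k hk).2, hz, integral_zero_measure]
    · left
      have hfin : μ Set.univ < ⊤ := by
        rcases (integrable_const_iff (c := (1 : ℂ))).mp hint with h | h
        · exact absurd h one_ne_zero
        · exact h.measure_univ_lt_top
      refine ⟨(μ Set.univ).toReal, ?_, ?_⟩
      · have hne : μ Set.univ ≠ 0 := fun h => hz (Measure.measure_univ_eq_zero.mp h)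
        exact ENNReal.toReal_pos hne hfin.ne
      · rw [← hval, integral_const]
        simp [Complex.real_smul]
        rfl
  · rintro (⟨r, hr, hs0⟩ | hall)
    · exact tmp_construction n K s r hr hs0
    · exact ⟨0, fun k hk => ⟨integrable_zero_measure,
        by rw [integral_zero_measure, hall k hk]⟩⟩
end

section
/- Let K be a finite subset of Z_+^n containing the zero multi-index, and let M = span{z^k : k ∈ K} be the linear space of complex polynomial functions on ℂ^n spanned by the monomials z^k, k ∈ K. Let L : M → ℂ be a linear functional with L(1) > 0 (real and positive). Then there exists a compactly supported non-negative Borel measure μ on ℂ^n such that L(p) = ∫_{ℂ^n} p(z) dμ(z) for all p ∈ M. -/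
open MeasureTheory

lemma int_eq_zero_of_dvd_of_abs_lt {a n : ℤ} (h : n ∣ a) (h2 : |a| < n) : a = 0 := by
  by_contra ha
  exact absurd h2 (not_lt.2 (Int.le_of_dvd (abs_pos.2 ha) ((dvd_abs n a).2 h)))

lemma zpow_sum₀ {ζ : ℂ} (h : ζ ≠ 0) {ι : Type*} (s : Finset ι) (f : ι → ℤ) :
    ζ ^ (∑ i ∈ s, f i) = ∏ i ∈ s, ζ ^ f i := by
  classical
  induction s using Finset.induction with
  | empty => simp
  | insert _ _ h' ih => rw [Finset.sum_insert h', Finset.prod_insert h', zpow_add₀ h, ih]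

lemma rootsum {N : ℕ} (hN : N ≠ 0) {ζ : ℂ} (hζ : IsPrimitiveRoot ζ N) (d : ℤ) :
    ∑ t : Fin N, ζ ^ (d * (t : ℤ)) = if (N : ℤ) ∣ d then (N : ℂ) else 0 := by
  have h1 : ∀ t : Fin N, ζ ^ (d * (t : ℤ)) = (ζ ^ d) ^ (t : ℕ) := by
    intro t; rw [zpow_mul, zpow_natCast]
  rw [Finset.sum_congr rfl (fun t _ => h1 t),
    Fin.sum_univ_eq_sum_range (fun t => (ζ ^ d) ^ t) N]
  by_cases hd : (N : ℤ) ∣ d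
  · rw [if_pos hd, (hζ.zpow_eq_one_iff_dvd d).2 hd]
    simp
  · rw [if_neg hd]
    have hne : ζ ^ d ≠ 1 := fun h => hd ((hζ.zpow_eq_one_iff_dvd d).1 h)
    rw [geom_sum_eq hne]
    have hNone : (ζ ^ d) ^ N = 1 := by
      rw [← zpow_natCast, ← zpow_mul, mul_comm, zpow_mul, zpow_natCast, hζ.pow_eq_one, one_zpow]
    simp [hNone]

lemma multisum {n N : ℕ} (hN : N ≠ 0) {ζ : ℂ} (hζ : IsPrimitiveRoot ζ N) (v : Fin n → ℤ) :
    ∑ j : Fin n → Fin N, ζ ^ (∑ i, v i * ((j i : ℕ) : ℤ)) =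
      if ∀ i, (N : ℤ) ∣ v i then ((N : ℂ)) ^ n else 0 := by
  classical
  have hζ0 : ζ ≠ 0 := hζ.ne_zero hN
  have h1 : ∀ j : Fin n → Fin N, ζ ^ (∑ i, v i * ((j i : ℕ) : ℤ)) =
      ∏ i, ζ ^ (v i * ((j i : ℕ) : ℤ)) := fun j => zpow_sum₀ hζ0 _ _
  rw [Finset.sum_congr rfl (fun j _ => h1 j)]
  have h2 : ∑ j : Fin n → Fin N, ∏ i, ζ ^ (v i * ((j i : ℕ) : ℤ)) =
      ∏ i, ∑ t : Fin N, ζ ^ (v i * ((t : ℕ) : ℤ)) := by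
    rw [Finset.prod_univ_sum (fun _ => Finset.univ)
      (fun (i : Fin n) (t : Fin N) => ζ ^ (v i * ((t : ℕ) : ℤ))), Fintype.piFinset_univ]
  rw [h2, Finset.prod_congr rfl (fun i _ => rootsum hN hζ (v i))]
  by_cases hv : ∀ i, (N : ℤ) ∣ v i
  · rw [if_pos hv, Finset.prod_congr rfl (fun i _ => if_pos (hv i))]
    simp
  · rw [if_neg hv]
    push_neg at hv
    obtain ⟨i, hi⟩ := hv
    exact Finset.prod_eq_zero (Finset.mem_univ i) (if_neg hi)

theorem functional_integral_representation
    (n : ℕ) (K : Finset (Fin n → ℕ)) (h0 : (0 : Fin n → ℕ) ∈ K)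
    (M : Submodule ℂ ((Fin n → ℂ) → ℂ))
    (hM : M = Submodule.span ℂ
      ((fun k : Fin n → ℕ => fun z : Fin n → ℂ => ∏ i, z i ^ k i) '' (K : Set (Fin n → ℕ))))
    (L : M →ₗ[ℂ] ℂ)
    (h1 : (fun _ : Fin n → ℂ => (1 : ℂ)) ∈ M)
    (hL1 : ∃ r : ℝ, 0 < r ∧ L ⟨fun _ => 1, h1⟩ = (r : ℂ)) :
    ∃ μ : Measure (Fin n → ℂ),
      (∃ S : Set (Fin n → ℂ), IsCompact S ∧ μ Sᶜ = 0) ∧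
      ∀ p : M,
        Integrable (p : (Fin n → ℂ) → ℂ) μ ∧
        ∫ z : Fin n → ℂ, (p : (Fin n → ℂ) → ℂ) z ∂μ = L p := by
  classical
  subst hM
  obtain ⟨r, hr, hLr⟩ := hL1
  have hmem : ∀ k ∈ K, (fun z : Fin n → ℂ => ∏ i, z i ^ k i) ∈ Submodule.span ℂ
      ((fun k : Fin n → ℕ => fun z : Fin n → ℂ => ∏ i, z i ^ k i) '' (K : Set (Fin n → ℕ))) :=
    fun k hk => Submodule.subset_span ⟨k, hk, rfl⟩
  -- the degree bound and the number of lattice points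
  set D : ℕ := K.sup fun k => Finset.univ.sup k with hDdef
  have hDK : ∀ k ∈ K, ∀ i, k i ≤ D :=
    fun k hk i => le_trans (Finset.le_sup (Finset.mem_univ i)) (Finset.le_sup hk)
  set N : ℕ := 2 * D + 1 with hNdef
  have hN0 : N ≠ 0 := Nat.succ_ne_zero _
  have hND : (2 * D : ℤ) < (N : ℤ) := by rw [hNdef]; push_cast; omega
  -- the primitive root of unity
  set ζ : ℂ := Complex.exp (2 * Real.pi * Complex.I / N) with hζdef
  have hζ : IsPrimitiveRoot ζ N := Complex.isPrimitiveRoot_exp N hN0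
  have hζ0 : ζ ≠ 0 := hζ.ne_zero hN0
  have hform : (2 * Real.pi * Complex.I / N : ℂ) = ((2 * Real.pi / N : ℝ) : ℂ) * Complex.I := by
    push_cast; ring
  have habs1 : ‖ζ‖ = 1 := by
    rw [hζdef, hform]
    exact Complex.norm_exp_ofReal_mul_I _
  have habs : ∀ d : ℤ, ‖ζ ^ d‖ = 1 := by
    intro d; rw [norm_zpow, habs1, one_zpow]
  have hconj : ∀ d : ℤ, (starRingEnd ℂ) (ζ ^ d) = ζ ^ (-d) := by
    intro d
    have hcζ : (starRingEnd ℂ) ζ = ζ⁻¹ := by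
      rw [hζdef, hform, ← Complex.exp_conj, map_mul, Complex.conj_ofReal, Complex.conj_I,
        mul_neg, ← neg_mul, ← Complex.exp_neg]
      ring_nf
    rw [map_zpow₀, hcζ, inv_zpow, ← zpow_neg]
  -- the moments
  set w : (Fin n → ℕ) → ℂ := fun k =>
    if hk : k ∈ K then L ⟨fun z => ∏ i, z i ^ k i, hmem k hk⟩ else 0 with hwdef
  have hwK : ∀ (k : Fin n → ℕ) (hk : k ∈ K),
      w k = L ⟨fun z => ∏ i, z i ^ k i, hmem k hk⟩ := fun k hk => dif_pos hk
  have hw0 : w 0 = r := by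
    have hm1 : (fun z : Fin n → ℂ => ∏ i, z i ^ (0 : Fin n → ℕ) i) = fun _ => (1 : ℂ) := by
      funext z; simp
    rw [hwK 0 h0, show (⟨fun z => ∏ i, z i ^ (0 : Fin n → ℕ) i, hmem 0 h0⟩ :
      Submodule.span ℂ _) = ⟨fun _ => 1, h1⟩ from Subtype.ext hm1, hLr]
  set K0 : Finset (Fin n → ℕ) := K.erase 0 with hK0def
  set R : ℝ := 1 + ∑ k ∈ K0, 2 * ‖w k‖ / r with hRdef
  have hR1 : (1 : ℝ) ≤ R := by
    rw [hRdef]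
    refine le_add_of_nonneg_right (Finset.sum_nonneg fun k _ => ?_)
    positivity
  have hR0 : (0 : ℝ) < R := lt_of_lt_of_le one_pos hR1
  set ε : (Fin n → ℕ) → ℂ := fun k => w k / ((r : ℂ) * (R : ℂ) ^ (∑ i, k i)) with hεdef
  have hεabs : ∀ k : Fin n → ℕ, ‖ε k‖ =
      ‖w k‖ / (r * R ^ (∑ i, k i)) := by
    intro k
    rw [hεdef]
    simp only [norm_div, norm_mul, norm_pow, Complex.norm_real, Real.norm_eq_abs,
      abs_of_pos hr, abs_of_pos hR0]
  clear_value D N ζ w K0 R ε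
  have hK0iff : ∀ k : Fin n → ℕ, k ∈ K0 ↔ k ∈ K ∧ k ≠ 0 := by
    intro k; rw [hK0def, Finset.mem_erase]; exact and_comm
  have hεb : ∑ k ∈ K0, 2 * ‖ε k‖ ≤ 1 := by
    have hper : ∀ k ∈ K0, 2 * ‖ε k‖ ≤ (2 * ‖w k‖ / r) / R := by
      intro k hk
      have hk0 : k ≠ 0 := ((hK0iff k).1 hk).2
      have hs1 : 1 ≤ ∑ i, k i := by
        by_contra h
        push_neg at h
        refine hk0 (funext fun i => ?_)
        have := Finset.sum_eq_zero_iff.mp (Nat.lt_one_iff.mp h)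
        exact this i (Finset.mem_univ i)
      have hRpow : R ≤ R ^ (∑ i, k i) := by
        calc R = R ^ 1 := (pow_one R).symm
        _ ≤ R ^ (∑ i, k i) := pow_le_pow_right₀ hR1 hs1
      rw [hεabs k, div_div, ← mul_div_assoc]
      rcases eq_or_lt_of_le (by positivity : (0:ℝ) ≤ 2 * ‖w k‖) with hA | hA
      · rw [← hA]; simp
      · exact ((div_le_div_iff_of_pos_left hA (by positivity) (by positivity)).2
          (mul_le_mul_of_nonneg_left hRpow hr.le))
    calc ∑ k ∈ K0, 2 * ‖ε k‖ ≤ ∑ k ∈ K0, (2 * ‖w k‖ / r) / R :=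
          Finset.sum_le_sum hper
    _ = (∑ k ∈ K0, 2 * ‖w k‖ / r) / R := by rw [Finset.sum_div]
    _ = (R - 1) / R := by
          rw [show R - 1 = ∑ k ∈ K0, 2 * ‖w k‖ / r from by rw [hRdef]; ring]
    _ ≤ 1 := by rw [div_le_one hR0]; linarith
  -- lattice points and weights
  set dzf : (Fin n → ℤ) → (Fin n → Fin N) → ℤ :=
    fun v j => ∑ i, v i * ((j i : ℕ) : ℤ) with hdzfdef
  set c : (Fin n → Fin N) → ℝ := fun j =>
    (r / (N : ℝ) ^ n) * (1 + ∑ k ∈ K0,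
      2 * (ε k * ζ ^ (-(dzf (fun i => (k i : ℤ)) j))).re) with hcdef
  set pts : (Fin n → Fin N) → (Fin n → ℂ) := fun j i => (R : ℂ) * ζ ^ ((j i : ℕ)) with hptsdef
  have hA : ∀ v : Fin n → ℤ, ∑ j : Fin n → Fin N, ζ ^ (dzf v j)
      = if ∀ i, (N : ℤ) ∣ v i then (N : ℂ) ^ n else 0 := by
    intro v
    simp only [hdzfdef]
    exact multisum hN0 hζ v
  have hdzsub : ∀ (v u : Fin n → ℤ) (j : Fin n → Fin N),
      dzf (v - u) j = dzf v j - dzf u j := by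
    intro v u j
    simp only [hdzfdef, Pi.sub_apply, sub_mul, Finset.sum_sub_distrib]
  have hdzadd : ∀ (v u : Fin n → ℤ) (j : Fin n → Fin N),
      dzf (v + u) j = dzf v j + dzf u j := by
    intro v u j
    simp only [hdzfdef, Pi.add_apply, add_mul, Finset.sum_add_distrib]
  have hc0 : ∀ j, 0 ≤ c j := by
    intro j
    simp only [hcdef]
    have hb : ∀ k ∈ K0, -(2 * ‖ε k‖)
        ≤ 2 * (ε k * ζ ^ (-(dzf (fun i => (k i : ℤ)) j))).re := by
      intro k _
      have h2 := (abs_le.mp (Complex.abs_re_le_norm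
        (ε k * ζ ^ (-(dzf (fun i => (k i : ℤ)) j))))).1
      rw [norm_mul, habs, mul_one] at h2
      linarith
    have h3 := Finset.sum_le_sum hb
    rw [Finset.sum_neg_distrib] at h3
    have h4 : (0:ℝ) ≤ 1 + ∑ k ∈ K0,
        2 * (ε k * ζ ^ (-(dzf (fun i => (k i : ℤ)) j))).re := by linarith
    have h5 : (0:ℝ) ≤ r / (N:ℝ)^n := by positivity
    exact mul_nonneg h5 h4
  have hccast : ∀ j : Fin n → Fin N, ((c j : ℝ) : ℂ)
      = ((r:ℂ) / (N:ℂ) ^ n) * (1 + ∑ k ∈ K0,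
        (ε k * ζ ^ (-(dzf (fun i => (k i : ℤ)) j))
          + (starRingEnd ℂ) (ε k) * ζ ^ (dzf (fun i => (k i : ℤ)) j))) := by
    intro j
    have key : ∀ k : Fin n → ℕ,
        (2:ℂ) * (((ε k * ζ ^ (-(dzf (fun i => (k i : ℤ)) j))).re : ℝ) : ℂ)
        = ε k * ζ ^ (-(dzf (fun i => (k i : ℤ)) j))
          + (starRingEnd ℂ) (ε k) * ζ ^ (dzf (fun i => (k i : ℤ)) j) := by
      intro k
      set u := ε k * ζ ^ (-(dzf (fun i => (k i : ℤ)) j)) with hu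
      have hcu : (starRingEnd ℂ) u = (starRingEnd ℂ) (ε k) * ζ ^ (dzf (fun i => (k i : ℤ)) j) := by
        rw [hu, map_mul, hconj, neg_neg]
      rw [← hcu, Complex.add_conj]
      push_cast
      ring
    simp only [hcdef]
    push_cast
    rw [Finset.sum_congr rfl fun k _ => key k]
  have hmval : ∀ (m : Fin n → ℕ) (j : Fin n → Fin N),
      (∏ i, pts j i ^ m i) = (R : ℂ) ^ (∑ i, m i) * ζ ^ (dzf (fun i => (m i : ℤ)) j) := by
    intro m j
    simp only [hptsdef]
    calc ∏ i, ((R:ℂ) * ζ ^ ((j i : ℕ))) ^ m i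
        = ∏ i, ((R:ℂ) ^ m i * ζ ^ ((j i : ℕ) * m i)) := by
          refine Finset.prod_congr rfl fun i _ => ?_
          rw [mul_pow, pow_mul]
      _ = (R:ℂ) ^ (∑ i, m i) * ζ ^ (∑ i, (j i : ℕ) * m i) := by
          rw [Finset.prod_mul_distrib, Finset.prod_pow_eq_pow_sum, Finset.prod_pow_eq_pow_sum]
      _ = (R:ℂ) ^ (∑ i, m i) * ζ ^ (dzf (fun i => (m i : ℤ)) j) := by
          congr 1
          rw [← zpow_natCast]
          congr 1
          simp only [hdzfdef]
          push_cast
          exact Finset.sum_congr rfl fun i _ => mul_comm _ _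
  clear_value dzf c pts
  -- divisibility facts
  have hdvd0 : ∀ m ∈ K, ((∀ i, (N:ℤ) ∣ (fun i => ((m i : ℕ) : ℤ)) i) ↔ m = 0) := by
    intro m hm
    constructor
    · intro h
      funext i
      have hd := h i
      have hb : ((m i : ℕ) : ℤ) ≤ (D : ℤ) := by exact_mod_cast hDK m hm i
      have h0' : ((m i : ℕ) : ℤ) = 0 := int_eq_zero_of_dvd_of_abs_lt hd
        (by rw [abs_of_nonneg (by positivity)]; omega)
      exact_mod_cast h0'
    · rintro rfl i
      simp
  have hdvdsub : ∀ m ∈ K, ∀ k ∈ K,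
      ((∀ i, (N:ℤ) ∣ ((fun i => ((m i : ℕ) : ℤ)) - fun i => ((k i : ℕ) : ℤ)) i) ↔ m = k) := by
    intro m hm k hk
    constructor
    · intro h
      funext i
      have hd := h i
      simp only [Pi.sub_apply] at hd
      have hb1 : ((m i : ℕ) : ℤ) ≤ (D : ℤ) := by exact_mod_cast hDK m hm i
      have hb2 : ((k i : ℕ) : ℤ) ≤ (D : ℤ) := by exact_mod_cast hDK k hk i
      have hb3 : (0:ℤ) ≤ ((m i : ℕ) : ℤ) := by positivity
      have hb4 : (0:ℤ) ≤ ((k i : ℕ) : ℤ) := by positivity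
      have h0' : ((m i : ℕ) : ℤ) - ((k i : ℕ) : ℤ) = 0 :=
        int_eq_zero_of_dvd_of_abs_lt hd (by rw [abs_sub_lt_iff]; omega)
      have : ((m i : ℕ) : ℤ) = ((k i : ℕ) : ℤ) := by omega
      exact_mod_cast this
    · rintro rfl i
      simp
  have hdvdadd : ∀ m ∈ K, ∀ k ∈ K0,
      ¬(∀ i, (N:ℤ) ∣ ((fun i => ((m i : ℕ) : ℤ)) + fun i => ((k i : ℕ) : ℤ)) i) := by
    intro m hm k hk h
    obtain ⟨hkK, hk0⟩ := (hK0iff k).1 hk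
    have : ∃ i, k i ≠ 0 := by
      by_contra hc
      push_neg at hc
      exact hk0 (funext hc)
    obtain ⟨i, hi⟩ := this
    have hd := h i
    simp only [Pi.add_apply] at hd
    have hb1 : ((m i : ℕ) : ℤ) ≤ (D : ℤ) := by exact_mod_cast hDK m hm i
    have hb2 : ((k i : ℕ) : ℤ) ≤ (D : ℤ) := by exact_mod_cast hDK k hkK i
    have hb3 : (0:ℤ) ≤ ((m i : ℕ) : ℤ) := by positivity
    have hb4 : (1:ℤ) ≤ ((k i : ℕ) : ℤ) := by exact_mod_cast Nat.one_le_iff_ne_zero.2 hi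
    have hpos : (0:ℤ) < ((m i : ℕ) : ℤ) + ((k i : ℕ) : ℤ) := by omega
    have := Int.le_of_dvd hpos hd
    omega
  -- the moment computation
  have hmoment : ∀ m ∈ K,
      ∑ j : Fin n → Fin N, (c j : ℂ) * ∏ i, pts j i ^ m i = w m := by
    intro m hm
    have hterm : ∀ j : Fin n → Fin N, (c j : ℂ) * ∏ i, pts j i ^ m i
        = ((r:ℂ) / (N:ℂ) ^ n) * (R:ℂ) ^ (∑ i, m i) *
          (ζ ^ (dzf (fun i => ((m i : ℕ) : ℤ)) j) + ∑ k ∈ K0,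
            (ε k * ζ ^ (dzf ((fun i => ((m i : ℕ) : ℤ)) - fun i => ((k i : ℕ) : ℤ)) j)
              + (starRingEnd ℂ) (ε k)
                * ζ ^ (dzf ((fun i => ((m i : ℕ) : ℤ)) + fun i => ((k i : ℕ) : ℤ)) j))) := by
      intro j
      have hS : ∑ k ∈ K0,
            (ε k * ζ ^ (dzf ((fun i => ((m i : ℕ) : ℤ)) - fun i => ((k i : ℕ) : ℤ)) j)
              + (starRingEnd ℂ) (ε k)
                * ζ ^ (dzf ((fun i => ((m i : ℕ) : ℤ)) + fun i => ((k i : ℕ) : ℤ)) j))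
          = (∑ k ∈ K0, (ε k * ζ ^ (-(dzf (fun i => ((k i : ℕ) : ℤ)) j))
              + (starRingEnd ℂ) (ε k) * ζ ^ (dzf (fun i => ((k i : ℕ) : ℤ)) j)))
            * ζ ^ (dzf (fun i => ((m i : ℕ) : ℤ)) j) := by
        rw [Finset.sum_mul]
        refine Finset.sum_congr rfl fun k _ => ?_
        rw [hdzsub, hdzadd, zpow_sub₀ hζ0, zpow_add₀ hζ0, zpow_neg]
        ring
      rw [hccast j, hmval m j, hS]
      ring
    have e1 : ∑ j : Fin n → Fin N, ζ ^ (dzf (fun i => ((m i : ℕ) : ℤ)) j)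
        = if m = 0 then (N:ℂ)^n else 0 := by
      rw [hA, if_congr (hdvd0 m hm) rfl rfl]
    have e2 : ∀ k ∈ K0, ∑ j : Fin n → Fin N,
        ζ ^ (dzf ((fun i => ((m i : ℕ) : ℤ)) - fun i => ((k i : ℕ) : ℤ)) j)
        = if m = k then (N:ℂ)^n else 0 := by
      intro k hk
      rw [hA, if_congr (hdvdsub m hm k ((hK0iff k).1 hk).1) rfl rfl]
    have e3 : ∀ k ∈ K0, ∑ j : Fin n → Fin N,
        ζ ^ (dzf ((fun i => ((m i : ℕ) : ℤ)) + fun i => ((k i : ℕ) : ℤ)) j) = 0 := by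
      intro k hk
      rw [hA, if_neg (hdvdadd m hm k hk)]
    calc ∑ j : Fin n → Fin N, (c j : ℂ) * ∏ i, pts j i ^ m i
        = ∑ j : Fin n → Fin N, ((r:ℂ) / (N:ℂ) ^ n) * (R:ℂ) ^ (∑ i, m i) *
          (ζ ^ (dzf (fun i => ((m i : ℕ) : ℤ)) j) + ∑ k ∈ K0,
            (ε k * ζ ^ (dzf ((fun i => ((m i : ℕ) : ℤ)) - fun i => ((k i : ℕ) : ℤ)) j)
              + (starRingEnd ℂ) (ε k)
                * ζ ^ (dzf ((fun i => ((m i : ℕ) : ℤ)) + fun i => ((k i : ℕ) : ℤ)) j))) :=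
          Finset.sum_congr rfl fun j _ => hterm j
      _ = ((r:ℂ) / (N:ℂ) ^ n) * (R:ℂ) ^ (∑ i, m i) *
          ((∑ j : Fin n → Fin N, ζ ^ (dzf (fun i => ((m i : ℕ) : ℤ)) j)) + ∑ k ∈ K0,
            (ε k * (∑ j : Fin n → Fin N,
                ζ ^ (dzf ((fun i => ((m i : ℕ) : ℤ)) - fun i => ((k i : ℕ) : ℤ)) j))
              + (starRingEnd ℂ) (ε k) * (∑ j : Fin n → Fin N,
                ζ ^ (dzf ((fun i => ((m i : ℕ) : ℤ)) + fun i => ((k i : ℕ) : ℤ)) j)))) := by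
          rw [← Finset.mul_sum]
          congr 1
          rw [Finset.sum_add_distrib]
          congr 1
          rw [Finset.sum_comm]
          refine Finset.sum_congr rfl fun k _ => ?_
          rw [Finset.sum_add_distrib, ← Finset.mul_sum, ← Finset.mul_sum]
      _ = ((r:ℂ) / (N:ℂ) ^ n) * (R:ℂ) ^ (∑ i, m i) *
          ((if m = 0 then (N:ℂ)^n else 0)
            + ∑ k ∈ K0, ε k * (if m = k then (N:ℂ)^n else 0)) := by
          rw [e1]
          congr 2
          refine Finset.sum_congr rfl fun k hk => ?_
          rw [e2 k hk, e3 k hk, mul_zero, add_zero]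
      _ = w m := by
          have hNc : ((N:ℂ))^n ≠ 0 := pow_ne_zero _ (Nat.cast_ne_zero.2 hN0)
          have hrc : (r:ℂ) ≠ 0 := Complex.ofReal_ne_zero.2 hr.ne'
          by_cases hm0 : m = 0
          · subst hm0
            rw [if_pos rfl]
            have hz : ∑ k ∈ K0, ε k * (if (0 : Fin n → ℕ) = k then (N:ℂ)^n else 0) = 0 :=
              Finset.sum_eq_zero fun k hk => by
                rw [if_neg fun h => ((hK0iff k).1 hk).2 h.symm, mul_zero]
            rw [hz, add_zero, hw0]
            simp only [Pi.zero_apply, Finset.sum_const_zero, pow_zero, mul_one]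
            field_simp
          · rw [if_neg hm0, zero_add]
            have hmK0 : m ∈ K0 := (hK0iff m).2 ⟨hm, hm0⟩
            rw [Finset.sum_eq_single m
              (fun k _ hne => by rw [if_neg fun h => hne h.symm, mul_zero])
              (fun h => absurd hmK0 h), if_pos rfl]
            have hεm : ε m = w m / ((r : ℂ) * (R : ℂ) ^ (∑ i, m i)) := by rw [hεdef]
            rw [hεm]
            have hRc : ((R:ℝ):ℂ) ^ (∑ i, m i) ≠ 0 :=
              pow_ne_zero _ (Complex.ofReal_ne_zero.2 hR0.ne')
            field_simp
  -- the measure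
  set μ : Measure (Fin n → ℂ) :=
    ∑ j : Fin n → Fin N, ENNReal.ofReal (c j) • Measure.dirac (pts j) with hμdef
  refine ⟨μ, ⟨Set.range pts, (Set.finite_range pts).isCompact, ?_⟩, ?_⟩
  · have hms : MeasurableSet ((Set.range pts)ᶜ) :=
      ((Set.finite_range pts).isClosed.measurableSet).compl
    rw [hμdef, Measure.finset_sum_apply]
    refine Finset.sum_eq_zero fun j _ => ?_
    rw [Measure.smul_apply, Measure.dirac_apply' _ hms,
      Set.indicator_of_notMem (Set.notMem_compl_iff.2 (Set.mem_range_self j)), smul_zero]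
  · have hcont : ∀ f, f ∈ Submodule.span ℂ
        ((fun k : Fin n → ℕ => fun z : Fin n → ℂ => ∏ i, z i ^ k i) '' (K : Set (Fin n → ℕ))) →
        Continuous f := by
      intro f hf
      induction hf using Submodule.span_induction with
      | mem x hx =>
        obtain ⟨k, _, rfl⟩ := hx
        exact continuous_finset_prod _ fun i _ => (continuous_apply i).pow _
      | zero => exact continuous_const
      | add x y hx hy ihx ihy => exact ihx.add ihy
      | smul a x hx ih => exact ih.const_smul a
    have hint : ∀ f : (Fin n → ℂ) → ℂ, Continuous f →
        Integrable f μ ∧ ∫ x, f x ∂μ = ∑ j : Fin n → Fin N, (c j : ℂ) * f (pts j) := by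
      intro f hf
      have hdirac : ∀ j : Fin n → Fin N, Integrable f (Measure.dirac (pts j)) := by
        intro j
        refine ⟨hf.aestronglyMeasurable, ?_⟩
        show (∫⁻ x, ‖f x‖₊ ∂Measure.dirac (pts j)) < ⊤
        rw [lintegral_dirac]
        exact ENNReal.coe_lt_top
      have hsm : ∀ j : Fin n → Fin N,
          Integrable f (ENNReal.ofReal (c j) • Measure.dirac (pts j)) :=
        fun j => (hdirac j).smul_measure ENNReal.ofReal_ne_top
      constructor
      · rw [hμdef]
        exact integrable_finset_sum_measure.2 fun j _ => hsm j
      · rw [hμdef, integral_finset_sum_measure fun j _ => hsm j]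
        refine Finset.sum_congr rfl fun j _ => ?_
        rw [integral_smul_measure, integral_dirac, ENNReal.toReal_ofReal (hc0 j),
          Complex.real_smul]
    have hT : ∀ f (hf : f ∈ Submodule.span ℂ
        ((fun k : Fin n → ℕ => fun z : Fin n → ℂ => ∏ i, z i ^ k i) '' (K : Set (Fin n → ℕ)))),
        ∑ j : Fin n → Fin N, (c j : ℂ) * f (pts j) = L ⟨f, hf⟩ := by
      intro f hf
      induction hf using Submodule.span_induction with
      | mem x hx =>
        obtain ⟨k, hk, rfl⟩ := hx
        rw [hmoment k hk]
        exact hwK k hk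
      | zero =>
        simp only [Pi.zero_apply, mul_zero, Finset.sum_const_zero]
        exact (map_zero L).symm
      | add x y hx hy ihx ihy =>
        calc ∑ j : Fin n → Fin N, (c j : ℂ) * (x + y) (pts j)
            = (∑ j : Fin n → Fin N, (c j : ℂ) * x (pts j))
              + ∑ j : Fin n → Fin N, (c j : ℂ) * y (pts j) := by
              rw [← Finset.sum_add_distrib]
              exact Finset.sum_congr rfl fun j _ => by rw [Pi.add_apply, mul_add]
          _ = L ⟨x, hx⟩ + L ⟨y, hy⟩ := by rw [ihx, ihy]
          _ = L (⟨x, hx⟩ + ⟨y, hy⟩) := (map_add L _ _).symm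
      | smul a x hx ih =>
        calc ∑ j : Fin n → Fin N, (c j : ℂ) * (a • x) (pts j)
            = a * ∑ j : Fin n → Fin N, (c j : ℂ) * x (pts j) := by
              rw [Finset.mul_sum]
              exact Finset.sum_congr rfl fun j _ => by rw [Pi.smul_apply, smul_eq_mul]; ring
          _ = a * L ⟨x, hx⟩ := by rw [ih]
          _ = L (a • ⟨x, hx⟩) := (map_smul L a _).symm
    intro p
    obtain ⟨f, hf⟩ := p
    exact ⟨(hint f (hcont f hf)).1, by rw [(hint f (hcont f hf)).2, hT f hf]⟩
end

section
/- Let n = 1 and K ⊆ Z_+ be a finite set containing 0, and let s : K → ℂ with s_0 > 0. Then there exists a compactly supported non-negative Borel measure μ on ℂ such that ∫_ℂ z^k dμ(z) = s_k for all k ∈ K. -/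
open MeasureTheory Finset

lemma root_sum' {m : ℕ} {ζ : ℂ} (hζ : IsPrimitiveRoot ζ m) (d : ℕ) :
    ∑ j ∈ Finset.range m, ζ ^ (j * d) = if m ∣ d then (m : ℂ) else 0 := by
  have hpow : ∀ j : ℕ, ζ ^ (j * d) = (ζ ^ d) ^ j := fun j => by rw [← pow_mul, Nat.mul_comm]
  simp only [hpow]
  by_cases h : m ∣ d
  · have h1 : ζ ^ d = 1 := (hζ.pow_eq_one_iff_dvd d).2 h
    simp [h1, h]
  · have h1 : ζ ^ d ≠ 1 := fun hc => h ((hζ.pow_eq_one_iff_dvd d).1 hc)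
    rw [geom_sum_eq h1]
    have h2 : (ζ ^ d) ^ m = 1 := by
      rw [← pow_mul, Nat.mul_comm, pow_mul, hζ.pow_eq_one, one_pow]
    simp [h2, h]


lemma norm_root' {m : ℕ} (hm : m ≠ 0) {ζ : ℂ} (hζ : IsPrimitiveRoot ζ m) : ‖ζ‖ = 1 := by
  have h1 : ζ ^ m = 1 := hζ.pow_eq_one
  have h2 : ‖ζ‖ ^ m = 1 := by rw [← norm_pow, h1, norm_one]
  have h3 : (0:ℝ) ≤ ‖ζ‖ := norm_nonneg _
  rcases lt_trichotomy ‖ζ‖ 1 with h | h | h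
  · exact absurd h2 (ne_of_lt (pow_lt_one₀ h3 h hm))
  · exact h
  · exact absurd h2 (ne_of_gt (one_lt_pow₀ h hm))


lemma conj_root' {m : ℕ} (hm : m ≠ 0) {ζ : ℂ} (hζ : IsPrimitiveRoot ζ m) :
    (starRingEnd ℂ) ζ = ζ ^ (m - 1) := by
  have h1 : ζ ^ m = 1 := hζ.pow_eq_one
  have hnorm : ‖ζ‖ = 1 := by
    have h2 : ‖ζ‖ ^ m = 1 := by rw [← norm_pow, h1, norm_one]
    have h3 : (0:ℝ) ≤ ‖ζ‖ := norm_nonneg _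
    rcases lt_trichotomy ‖ζ‖ 1 with h | h | h
    · exact absurd h2 (by have := pow_lt_one₀ h3 h hm; exact ne_of_lt this)
    · exact h
    · exact absurd h2 (by have := one_lt_pow₀ h hm; exact (ne_of_lt this).symm)
  have hinv : ζ⁻¹ = (starRingEnd ℂ) ζ := Complex.inv_eq_conj hnorm
  rw [← hinv]
  refine (eq_inv_of_mul_eq_one_left ?_).symm
  rw [← pow_succ, Nat.sub_add_cancel (Nat.one_le_iff_ne_zero.2 hm)]
  exact h1


lemma integrable_dirac'' (f : ℂ → ℂ) (a : ℂ) : Integrable f (Measure.dirac a) := by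
  have h : f =ᵐ[Measure.dirac a] (fun _ => f a) := by
    rw [Filter.EventuallyEq, MeasureTheory.ae_dirac_eq]
    exact Filter.eventually_pure.2 rfl
  exact (integrable_const (f a)).congr h.symm


lemma moment_sum' {M : ℕ} {m : ℕ} (hm : m = 2 * M + 1) {ζ : ℂ} (hζ : IsPrimitiveRoot ζ m)
    (K' : Finset ℕ) (hK' : ∀ k ∈ K', 1 ≤ k ∧ k ≤ M) (r t : ℝ) (c : ℕ → ℂ)
    (l : ℕ) (hl : l ≤ M) :
    ∑ j ∈ Finset.range m,
        ((r + ∑ k ∈ K', 2 * (c k * ζ ^ (j * (m - k))).re : ℝ) : ℂ) * ((t : ℂ) * ζ ^ j) ^ l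
      = (m : ℂ) * (t : ℂ) ^ l *
          ((if l = 0 then (r : ℂ) else 0) + (if l ∈ K' then c l else 0)) := by
  have hm0 : m ≠ 0 := by omega
  -- step 1: rewrite each summand
  have step1 : ∀ j ∈ Finset.range m,
      ((r + ∑ k ∈ K', 2 * (c k * ζ ^ (j * (m - k))).re : ℝ) : ℂ) * ((t : ℂ) * ζ ^ j) ^ l
      = (r : ℂ) * (t : ℂ) ^ l * ζ ^ (j * l)
        + ∑ k ∈ K', (c k * (t : ℂ) ^ l * ζ ^ (j * (m - k + l))
            + (starRingEnd ℂ) (c k) * (t : ℂ) ^ l * ζ ^ (j * ((m - 1) * (m - k) + l))) := by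
    intro j _
    have hsplit : ((r + ∑ k ∈ K', 2 * (c k * ζ ^ (j * (m - k))).re : ℝ) : ℂ)
        = (r : ℂ) + ∑ k ∈ K', (c k * ζ ^ (j * (m - k))
            + (starRingEnd ℂ) (c k) * ζ ^ (j * ((m - 1) * (m - k)))) := by
      push_cast
      congr 1
      refine Finset.sum_congr rfl fun k hk => ?_
      rw [eq_comm]
      have hc : (starRingEnd ℂ) (ζ ^ (j * (m - k))) = ζ ^ (j * ((m - 1) * (m - k))) := by
        rw [map_pow, conj_root' hm0 hζ, ← pow_mul]
        congr 1
        ring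
      calc c k * ζ ^ (j * (m - k)) + (starRingEnd ℂ) (c k) * ζ ^ (j * ((m - 1) * (m - k)))
          = c k * ζ ^ (j * (m - k)) + (starRingEnd ℂ) (c k * ζ ^ (j * (m - k))) := by
            rw [map_mul, hc]
        _ = ((2 * (c k * ζ ^ (j * (m - k))).re : ℝ) : ℂ) := Complex.add_conj _
        _ = 2 * ((c k * ζ ^ (j * (m - k))).re : ℂ) := by push_cast; ring
    rw [hsplit]
    have hp : ((t : ℂ) * ζ ^ j) ^ l = (t : ℂ) ^ l * ζ ^ (j * l) := by
      rw [mul_pow, ← pow_mul]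
    rw [hp, add_mul, Finset.sum_mul]
    congr 1
    · ring
    refine Finset.sum_congr rfl fun k hk => ?_
    have e1 : ζ ^ (j * (m - k + l)) = ζ ^ (j * (m - k)) * ζ ^ (j * l) := by
      rw [← pow_add, Nat.mul_add]
    have e2 : ζ ^ (j * ((m - 1) * (m - k) + l)) = ζ ^ (j * ((m - 1) * (m - k))) * ζ ^ (j * l) := by
      rw [← pow_add, Nat.mul_add]
    rw [e1, e2]
    ring
  rw [Finset.sum_congr rfl step1]
  rw [Finset.sum_add_distrib, Finset.sum_comm]
  have hS0 : ∑ j ∈ Finset.range m, (r : ℂ) * (t : ℂ) ^ l * ζ ^ (j * l)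
      = (r : ℂ) * (t : ℂ) ^ l * (if l = 0 then (m : ℂ) else 0) := by
    rw [← Finset.mul_sum, root_sum' hζ]
    congr 1
    by_cases h : l = 0
    · simp [h]
    · have : ¬ m ∣ l := fun hd => by
        have := Nat.le_of_dvd (by omega) hd
        omega
      simp [h, this]
  have hSk : ∀ k ∈ K',
      (∑ j ∈ Finset.range m, (c k * (t : ℂ) ^ l * ζ ^ (j * (m - k + l))
        + (starRingEnd ℂ) (c k) * (t : ℂ) ^ l * ζ ^ (j * ((m - 1) * (m - k) + l))))
      = c k * (t : ℂ) ^ l * (if l = k then (m : ℂ) else 0) := by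
    intro k hk
    obtain ⟨hk1, hk2⟩ := hK' k hk
    rw [Finset.sum_add_distrib, ← Finset.mul_sum, ← Finset.mul_sum, root_sum' hζ, root_sum' hζ]
    have hd1 : (m ∣ m - k + l) ↔ l = k := by
      constructor
      · intro hd
        obtain ⟨q, hq⟩ := hd
        have h1 : m * q < m * 2 := by omega
        have hq2 : q < 2 := lt_of_mul_lt_mul_left h1 (Nat.zero_le m)
        interval_cases q <;> omega
      · intro h; subst h; simp [Nat.sub_add_cancel (by omega : l ≤ m)]
    have hd2 : ¬ (m ∣ (m - 1) * (m - k) + l) := by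
      intro hd
      have heq : (m - 1) * (m - k) + l = m * (m - k - 1) + (k + l) := by
        have h1 : 1 ≤ m := by omega
        have h2 : k ≤ m := by omega
        have h3 : 1 ≤ m - k := by omega
        zify [h1, h2, h3]
        ring
      rw [heq] at hd
      have hdkl : m ∣ k + l := (Nat.dvd_add_right ⟨m - k - 1, rfl⟩).mp hd
      have := Nat.le_of_dvd (by omega) hdkl
      omega
    simp only [hd2, if_false, mul_zero, add_zero]
    by_cases h : l = k
    · rw [if_pos (hd1.2 h), if_pos h]
    · rw [if_neg (fun hd => h (hd1.1 hd)), if_neg h]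
  rw [Finset.sum_congr rfl hSk, hS0]
  have hfin : ∑ k ∈ K', c k * (t : ℂ) ^ l * (if l = k then (m : ℂ) else 0)
      = (if l ∈ K' then c l * (t : ℂ) ^ l * (m : ℂ) else 0) := by
    simp only [mul_ite, mul_zero]
    rw [Finset.sum_ite_eq]
  rw [hfin]
  have hexcl : l = 0 → l ∉ K' := fun h hmem => by
    have := (hK' l hmem).1; omega
  by_cases h1 : l = 0
  · have h2 : l ∉ K' := hexcl h1
    subst h1
    simp [h2, mul_comm]
  · by_cases h2 : l ∈ K' <;> simp only [if_pos, if_neg, h1, h2, if_true, if_false] <;> ring_nf <;> simp [h1]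


theorem truncated_moment_problem_C_one_dim
    (K : Finset ℕ) (h0 : 0 ∈ K) (s : ℕ → ℂ)
    (hs0 : ∃ r : ℝ, 0 < r ∧ s 0 = (r : ℂ)) :
    ∃ μ : Measure ℂ,
      (∃ S : Set ℂ, IsCompact S ∧ μ Sᶜ = 0) ∧
      ∀ k ∈ K,
        Integrable (fun z : ℂ => z ^ k) μ ∧
        ∫ z : ℂ, z ^ k ∂μ = s k := by
  classical
  obtain ⟨r, hr, hs0eq⟩ := hs0
  set M := K.sup id with hMdef
  set m := 2 * M + 1 with hmdef
  have hm0 : m ≠ 0 := by omega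
  set ζ : ℂ := Complex.exp (2 * Real.pi * Complex.I / m) with hζdef
  have hζ : IsPrimitiveRoot ζ m := Complex.isPrimitiveRoot_exp m hm0
  set K' := K.erase 0 with hK'def
  have hK' : ∀ k ∈ K', 1 ≤ k ∧ k ≤ M := by
    intro k hk
    refine ⟨?_, ?_⟩
    · have := Finset.ne_of_mem_erase hk; omega
    · exact Finset.le_sup (f := id) (Finset.mem_of_mem_erase hk)
  set A : ℝ := ∑ k ∈ K', 2 * ‖s k‖ with hAdef
  have hA0 : 0 ≤ A := Finset.sum_nonneg fun k _ => by positivity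
  set t : ℝ := max 1 (A / r + 1) with htdef
  have ht1 : (1:ℝ) ≤ t := le_max_left _ _
  have ht0 : (0:ℝ) < t := lt_of_lt_of_le one_pos ht1
  set c : ℕ → ℂ := fun k => s k / (t : ℂ) ^ k with hcdef
  set w : ℕ → ℝ := fun j => (r + ∑ k ∈ K', 2 * (c k * ζ ^ (j * (m - k))).re) / m with hwdef
  -- nonnegativity of weights
  have habs : ∀ j k, ‖c k * ζ ^ (j * (m - k))‖ = ‖c k‖ := by
    intro j k
    rw [norm_mul, norm_pow, norm_root' hm0 hζ, one_pow, mul_one]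
  have hck : ∀ k ∈ K', ‖c k‖ ≤ ‖s k‖ / t := by
    intro k hk
    obtain ⟨hk1, _⟩ := hK' k hk
    have htk : t ≤ t ^ k := le_self_pow₀ ht1 (by omega)
    have htkpos : (0:ℝ) < t ^ k := pow_pos ht0 k
    rw [hcdef]
    simp only []
    rw [norm_div, norm_pow, Complex.norm_real, Real.norm_eq_abs, abs_of_pos ht0]
    exact div_le_div_of_nonneg_left (norm_nonneg _) ht0 htk
  have hsum_le : ∑ k ∈ K', 2 * ‖c k‖ ≤ r := by
    have h1 : ∑ k ∈ K', 2 * ‖c k‖ ≤ A / t := by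
      rw [hAdef, Finset.sum_div]
      refine Finset.sum_le_sum fun k hk => ?_
      have := hck k hk
      rw [mul_div_assoc]
      linarith
    have h2 : A / t ≤ r := by
      rw [div_le_iff₀ ht0]
      have ht2 : A / r + 1 ≤ t := le_max_right _ _
      have : A + r ≤ r * t := by
        have := mul_le_mul_of_nonneg_left ht2 (le_of_lt hr)
        rw [mul_add, mul_one, mul_div_cancel₀ _ (ne_of_gt hr)] at this
        linarith
      linarith
    linarith
  have hw0 : ∀ j, 0 ≤ w j := by
    intro j
    rw [hwdef]
    apply div_nonneg _ (by positivity)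
    have h1 : ∀ k ∈ K', -(2 * ‖c k‖) ≤ 2 * (c k * ζ ^ (j * (m - k))).re := by
      intro k hk
      have h2 : |(c k * ζ ^ (j * (m - k))).re| ≤ ‖c k * ζ ^ (j * (m - k))‖ :=
        Complex.abs_re_le_norm _
      rw [habs j k] at h2
      have := abs_le.1 h2
      linarith [this.1]
    have h3 : -(∑ k ∈ K', 2 * ‖c k‖) ≤ ∑ k ∈ K', 2 * (c k * ζ ^ (j * (m - k))).re := by
      rw [← Finset.sum_neg_distrib]
      exact Finset.sum_le_sum h1
    linarith
  -- the measure
  set μ : Measure ℂ :=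
    ∑ j ∈ Finset.range m, (ENNReal.ofReal (w j)) • Measure.dirac ((t : ℂ) * ζ ^ j) with hμdef
  refine ⟨μ, ?_, ?_⟩
  · -- compact support
    refine ⟨↑((Finset.range m).image fun j => (t : ℂ) * ζ ^ j), ?_, ?_⟩
    · exact (Finset.finite_toSet _).isCompact
    · rw [hμdef, Measure.finset_sum_apply]
      refine Finset.sum_eq_zero fun j hj => ?_
      rw [Measure.smul_apply, smul_eq_mul]
      have hmem : (t : ℂ) * ζ ^ j ∈ ((Finset.range m).image fun j => (t : ℂ) * ζ ^ j : Finset ℂ) :=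
        Finset.mem_image_of_mem _ hj
      have : Measure.dirac ((t : ℂ) * ζ ^ j) (↑((Finset.range m).image fun j => (t : ℂ) * ζ ^ j) : Set ℂ)ᶜ = 0 := by
        rw [Measure.dirac_apply]
        have hnot : (t:ℂ) * ζ ^ j ∉ (↑((Finset.range m).image fun j => (t : ℂ) * ζ ^ j) : Set ℂ)ᶜ := by
          rw [Set.mem_compl_iff, not_not]
          exact Finset.mem_coe.2 hmem
        exact Set.indicator_of_notMem hnot _
      rw [this, mul_zero]
  · intro k hk
    have hkM : k ≤ M := Finset.le_sup (f := id) hk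
    have hint : ∀ j ∈ Finset.range m,
        Integrable (fun z : ℂ => z ^ k) ((ENNReal.ofReal (w j)) • Measure.dirac ((t : ℂ) * ζ ^ j)) :=
      fun j _ => (integrable_dirac'' _ _).smul_measure ENNReal.ofReal_ne_top
    refine ⟨integrable_finset_sum_measure.2 hint, ?_⟩
    rw [hμdef, integral_finset_sum_measure hint]
    have hterm : ∀ j ∈ Finset.range m,
        ∫ z : ℂ, z ^ k ∂((ENNReal.ofReal (w j)) • Measure.dirac ((t : ℂ) * ζ ^ j))
        = ((w j : ℂ)) * ((t : ℂ) * ζ ^ j) ^ k := by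
      intro j _
      rw [integral_smul_measure, integral_dirac, ENNReal.toReal_ofReal (hw0 j)]
      rw [Complex.real_smul]
    rw [Finset.sum_congr rfl hterm]
    have hwc : ∀ j, ((w j : ℝ) : ℂ)
        = ((r + ∑ k ∈ K', 2 * (c k * ζ ^ (j * (m - k))).re : ℝ) : ℂ) / (m : ℂ) := by
      intro j
      rw [hwdef]
      push_cast
      ring
    have : ∑ j ∈ Finset.range m, ((w j : ℂ)) * ((t : ℂ) * ζ ^ j) ^ k
        = (∑ j ∈ Finset.range m,
            ((r + ∑ k ∈ K', 2 * (c k * ζ ^ (j * (m - k))).re : ℝ) : ℂ) * ((t : ℂ) * ζ ^ j) ^ k) / m := by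
      rw [Finset.sum_div]
      exact Finset.sum_congr rfl fun j _ => by rw [hwc j, div_mul_eq_mul_div]
    rw [this, moment_sum' hmdef hζ K' hK' r t c k hkM]
    have hmne : (m : ℂ) ≠ 0 := Nat.cast_ne_zero.2 hm0
    have htkne : ((t : ℂ)) ^ k ≠ 0 := pow_ne_zero _ (by exact_mod_cast ne_of_gt ht0)
    by_cases hk0 : k = 0
    · subst hk0
      have hnot : (0:ℕ) ∉ K' := fun h => by have := (hK' 0 h).1; omega
      simp only [if_pos rfl, if_neg hnot, add_zero, pow_zero, mul_one, hs0eq]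
      field_simp
      simp
    · have hkK' : k ∈ K' := Finset.mem_erase.2 ⟨hk0, hk⟩
      simp only [if_neg hk0, if_pos hkK', zero_add, hcdef]
      field_simp
end
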